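/- arXiv:1005.1726 — 5 statements merged into one kernel-verified Lean document; each statement's English description precedes it below -/
import Mathlib

section
/- (Dowling–Wilson inequality for the partition polynomial.) Let G = (V,E) be a connected finite simple graph with n vertices. Then for each k ∈ {1,…,n}, Σ_{i=1}^{k} q_i(G) ≥ Σ_{i=0}^{k−1} q_{n−i}(G). -/
set_option linter.unusedSectionVars false
set_option linter.unusedVariables false
set_option maxHeartbeats 1000000


open Finset

variable {V : Type*} [Fintype V] [DecidableEq V]

/-- `P` is a set partition of the vertex set `V`, given as a finset of (nonempty,
pairwise disjoint, covering) blocks. -/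
def IsPartition (P : Finset (Finset V)) : Prop :=
  ∅ ∉ P ∧ ∀ v : V, ∃! B : Finset V, B ∈ P ∧ v ∈ B

/-- `P` is a connected set partition of `G`: every block induces a connected subgraph. -/
def IsConnPartition (G : SimpleGraph V) (P : Finset (Finset V)) : Prop :=
  IsPartition P ∧ ∀ B ∈ P, (G.induce (B : Set V)).Connected

open scoped Classical in
/-- The finset of all connected set partitions (`Π_c(G)`). -/
noncomputable def connParts (G : SimpleGraph V) : Finset (Finset (Finset V)) :=
  Finset.univ.filter (IsConnPartition G)

open scoped Classical in
/-- The partition polynomial `Q(G,x) = Σ_{π ∈ Π_c(G)} x^{|π|}`, evaluated at `x : ℤ`. -/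
noncomputable def Q (G : SimpleGraph V) (x : ℤ) : ℤ :=
  ∑ P ∈ connParts G, x ^ P.card

open scoped Classical in
/-- `q_i(G)`: the number of connected set partitions of `G` with exactly `i` blocks
(the index `i` taken as an integer). -/
noncomputable def qcount (G : SimpleGraph V) (i : ℤ) : ℕ :=
  ((connParts G).filter (fun P => (P.card : ℤ) = i)).card


namespace DW
open SimpleGraph
open scoped Classical

variable {V : Type*} [Fintype V] [DecidableEq V]

noncomputable def cls (A : Finset (Sym2 V)) (v : V) : Finset V :=
  univ.filter (fun w => (fromEdgeSet (A : Set (Sym2 V))).Reachable v w)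

lemma mem_cls {A : Finset (Sym2 V)} {v w : V} :
    w ∈ cls A v ↔ (fromEdgeSet (A : Set (Sym2 V))).Reachable v w := by
  simp [cls]

lemma self_mem_cls {A : Finset (Sym2 V)} {v : V} : v ∈ cls A v := mem_cls.2 (Reachable.refl v)

lemma cls_eq_of_reachable {A : Finset (Sym2 V)} {v w : V}
    (h : (fromEdgeSet (A : Set (Sym2 V))).Reachable v w) : cls A v = cls A w := by
  ext x; simp only [mem_cls]
  exact ⟨fun h2 => h.symm.trans h2, fun h2 => h.trans h2⟩

lemma cls_eq_iff {A : Finset (Sym2 V)} {v w : V} :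
    cls A v = cls A w ↔ (fromEdgeSet (A : Set (Sym2 V))).Reachable v w := by
  refine ⟨fun h => ?_, cls_eq_of_reachable⟩
  have : w ∈ cls A v := h ▸ self_mem_cls
  exact mem_cls.1 this

noncomputable def comp (A : Finset (Sym2 V)) : Finset (Finset V) := univ.image (cls A)

lemma mem_comp {A : Finset (Sym2 V)} {B : Finset V} : B ∈ comp A ↔ ∃ v, cls A v = B := by
  simp [comp]

noncomputable def FE (G : SimpleGraph V) (P : Finset (Finset V)) : Finset (Sym2 V) :=
  G.edgeFinset.filter (fun e => ∃ B ∈ P, ∀ v ∈ e, v ∈ B)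

lemma FE_subset (G : SimpleGraph V) (P : Finset (Finset V)) : FE G P ⊆ G.edgeFinset :=
  filter_subset _ _

lemma mem_FE {G : SimpleGraph V} {P : Finset (Finset V)} {u v : V} :
    s(u, v) ∈ FE G P ↔ G.Adj u v ∧ ∃ B ∈ P, u ∈ B ∧ v ∈ B := by
  simp only [FE, mem_filter, mem_edgeFinset, mem_edgeSet, Sym2.mem_iff]
  constructor
  · rintro ⟨h1, B, hB, h2⟩
    exact ⟨h1, B, hB, h2 u (Or.inl rfl), h2 v (Or.inr rfl)⟩
  · rintro ⟨h1, B, hB, h2, h3⟩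
    exact ⟨h1, B, hB, by rintro x (rfl | rfl) <;> assumption⟩

lemma block_unique {P : Finset (Finset V)} (hP : IsPartition P) {B B' : Finset V}
    (hB : B ∈ P) (hB' : B' ∈ P) {v : V} (h1 : v ∈ B) (h2 : v ∈ B') : B = B' := by
  obtain ⟨C, _, hu⟩ := hP.2 v
  exact (hu B ⟨hB, h1⟩).trans (hu B' ⟨hB', h2⟩).symm

lemma reachable_block {G : SimpleGraph V} {P : Finset (Finset V)} (hP : IsPartition P)
    {A : Finset (Sym2 V)} (hA : A ⊆ FE G P) {u v : V}
    (h : (fromEdgeSet (A : Set (Sym2 V))).Reachable u v) {B : Finset V} (hB : B ∈ P)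
    (hu : u ∈ B) : v ∈ B := by
  rw [reachable_iff_reflTransGen] at h
  induction h with
  | refl => exact hu
  | @tail b c h1 h2 ih =>
    rw [fromEdgeSet_adj] at h2
    have hbc : s(b, c) ∈ FE G P := hA (by exact_mod_cast h2.1)
    obtain ⟨_, B', hB', hbB', hcB'⟩ := mem_FE.1 hbc
    rwa [block_unique hP hB hB' ih hbB']

lemma isPartition_comp (A : Finset (Sym2 V)) : IsPartition (comp A) := by
  constructor
  · intro h
    obtain ⟨v, hv⟩ := mem_comp.1 h
    exact absurd (hv ▸ (self_mem_cls (A := A) (v := v))) (notMem_empty v)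
  · intro v
    refine ⟨cls A v, ⟨mem_comp.2 ⟨v, rfl⟩, self_mem_cls⟩, ?_⟩
    rintro B ⟨hB, hvB⟩
    obtain ⟨u, rfl⟩ := mem_comp.1 hB
    exact cls_eq_of_reachable (mem_cls.1 hvB)

lemma induce_connected_cls {G : SimpleGraph V} {A : Finset (Sym2 V)} (hA : A ⊆ G.edgeFinset)
    (v : V) : (G.induce ((cls A v : Finset V) : Set V)).Connected := by
  rw [connected_iff]
  have key : ∀ x y : V, Relation.ReflTransGen (fromEdgeSet (A : Set (Sym2 V))).Adj x y →
      ∀ (hx : x ∈ cls A v) (hy : y ∈ cls A v),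
      (G.induce ((cls A v : Finset V) : Set V)).Reachable ⟨x, hx⟩ ⟨y, hy⟩ := by
    intro x y hxy
    induction hxy with
    | refl => intro hx hy; exact Reachable.refl _
    | @tail b c h1 h2 ih =>
      intro hx hc
      have hb : b ∈ cls A v :=
        mem_cls.2 ((mem_cls.1 hc).trans h2.reachable.symm)
      refine (ih hx hb).trans (Adj.reachable ?_)
      rw [fromEdgeSet_adj] at h2
      have hadj : G.Adj b c := by
        have := hA (by exact_mod_cast h2.1)
        rwa [mem_edgeFinset, mem_edgeSet] at this
      exact hadj
  constructor
  · rintro ⟨x, hx⟩ ⟨y, hy⟩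
    have hx' : x ∈ cls A v := hx
    have hy' : y ∈ cls A v := hy
    have hxy : (fromEdgeSet (A : Set (Sym2 V))).Reachable x y :=
      ((mem_cls.1 hx').symm.trans (mem_cls.1 hy'))
    rw [reachable_iff_reflTransGen] at hxy
    exact key x y hxy hx' hy'
  · exact ⟨⟨v, self_mem_cls⟩⟩

lemma connParts_comp {G : SimpleGraph V} {A : Finset (Sym2 V)} (hA : A ⊆ G.edgeFinset) :
    IsConnPartition G (comp A) := by
  refine ⟨isPartition_comp A, ?_⟩
  intro B hB
  obtain ⟨v, rfl⟩ := mem_comp.1 hB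
  exact induce_connected_cls hA v

lemma cls_FE_eq_block {G : SimpleGraph V} {P : Finset (Finset V)} (hP : IsConnPartition G P)
    {v : V} {B : Finset V} (hB : B ∈ P) (hv : v ∈ B) : cls (FE G P) v = B := by
  apply Finset.Subset.antisymm
  · intro w hw
    exact reachable_block hP.1 (subset_refl _) (mem_cls.1 hw) hB hv
  · intro w hw
    have hconn := hP.2 B hB
    have hr : (G.induce (B : Set V)).Reachable ⟨v, hv⟩ ⟨w, hw⟩ := hconn.preconnected _ _
    rw [mem_cls]
    rw [reachable_iff_reflTransGen] at hr
    have key : ∀ (a b : (B : Set V)), Relation.ReflTransGen (G.induce (B : Set V)).Adj a b →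
        (fromEdgeSet ((FE G P : Finset (Sym2 V)) : Set (Sym2 V))).Reachable a.1 b.1 := by
      intro a b hab
      induction hab with
      | refl => exact Reachable.refl _
      | @tail x y h1 h2 ih =>
        refine ih.trans (Adj.reachable ?_)
        have hadj : G.Adj x.1 y.1 := h2
        rw [fromEdgeSet_adj]
        refine ⟨?_, hadj.ne⟩
        have : s(x.1, y.1) ∈ FE G P := mem_FE.2 ⟨hadj, B, hB, x.2, y.2⟩
        exact_mod_cast this
    exact key _ _ hr

lemma comp_FE {G : SimpleGraph V} {P : Finset (Finset V)} (hP : IsConnPartition G P) :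
    comp (FE G P) = P := by
  ext B
  rw [mem_comp]
  constructor
  · rintro ⟨v, rfl⟩
    obtain ⟨Bv, ⟨hBv, hvBv⟩, _⟩ := hP.1.2 v
    rw [cls_FE_eq_block hP hBv hvBv]; exact hBv
  · intro hB
    have hne : B.Nonempty := by
      rw [Finset.nonempty_iff_ne_empty]
      rintro rfl; exact hP.1.1 hB
    obtain ⟨v, hv⟩ := hne
    exact ⟨v, cls_FE_eq_block hP hB hv⟩

lemma subset_FE_comp {G : SimpleGraph V} {A : Finset (Sym2 V)} (hA : A ⊆ G.edgeFinset) :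
    A ⊆ FE G (comp A) := by
  intro e he
  induction e using Sym2.ind with
  | _ u v =>
    have hadj : G.Adj u v := by
      have := hA he; rwa [mem_edgeFinset, mem_edgeSet] at this
    have hr : (fromEdgeSet (A : Set (Sym2 V))).Reachable u v :=
      (Adj.reachable (by rw [fromEdgeSet_adj]; exact ⟨by exact_mod_cast he, hadj.ne⟩))
    exact mem_FE.2 ⟨hadj, cls A u, mem_comp.2 ⟨u, rfl⟩, self_mem_cls, mem_cls.2 hr⟩

lemma FE_comp_subset {G : SimpleGraph V} {A : Finset (Sym2 V)} {P : Finset (Finset V)}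
    (hP : IsPartition P) (hA : A ⊆ FE G P) : FE G (comp A) ⊆ FE G P := by
  intro e he
  induction e using Sym2.ind with
  | _ u v =>
    obtain ⟨hadj, C, hC, huC, hvC⟩ := mem_FE.1 he
    obtain ⟨x, rfl⟩ := mem_comp.1 hC
    have hr : (fromEdgeSet (A : Set (Sym2 V))).Reachable u v :=
      (mem_cls.1 huC).symm.trans (mem_cls.1 hvC)
    obtain ⟨B, ⟨hB, huB⟩, _⟩ := hP.2 u
    exact mem_FE.2 ⟨hadj, B, hB, huB, reachable_block hP hA hr hB huB⟩

section Counting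

variable {A : Finset (Sym2 V)} {u v : V}

lemma reach_insert_iff (h : (fromEdgeSet (A : Set (Sym2 V))).Reachable u v) (x y : V) :
    (fromEdgeSet ((insert s(u, v) A : Finset (Sym2 V)) : Set (Sym2 V))).Reachable x y ↔
      (fromEdgeSet (A : Set (Sym2 V))).Reachable x y := by
  constructor
  · intro h2
    rw [reachable_iff_reflTransGen] at h2
    induction h2 with
    | refl => exact Reachable.refl _
    | @tail b c h1 h2 ih =>
      refine ih.trans ?_
      rw [fromEdgeSet_adj] at h2
      have hbc : s(b, c) ∈ insert s(u, v) A := by exact_mod_cast h2.1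
      rcases Finset.mem_insert.1 hbc with heq | hmem
      · rcases Sym2.eq_iff.1 heq with ⟨rfl, rfl⟩ | ⟨rfl, rfl⟩
        · exact h
        · exact h.symm
      · exact Adj.reachable (by rw [fromEdgeSet_adj]; exact ⟨by exact_mod_cast hmem, h2.2⟩)
  · exact fun h2 => h2.mono (fromEdgeSet_mono (by exact_mod_cast Finset.subset_insert _ _))

lemma comp_insert_of_reachable (h : (fromEdgeSet (A : Set (Sym2 V))).Reachable u v) :
    comp (insert s(u, v) A) = comp A := by
  have : cls (insert s(u, v) A) = cls A := by
    funext x; ext w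
    rw [mem_cls, mem_cls, reach_insert_iff h]
  rw [comp, comp, this]

lemma reach_insert_cases {x y : V}
    (h : (fromEdgeSet ((insert s(u, v) A : Finset (Sym2 V)) : Set (Sym2 V))).Reachable x y) :
    (fromEdgeSet (A : Set (Sym2 V))).Reachable x y ∨
      (fromEdgeSet (A : Set (Sym2 V))).Reachable x u ∨
      (fromEdgeSet (A : Set (Sym2 V))).Reachable x v := by
  rw [reachable_iff_reflTransGen] at h
  induction h with
  | refl => exact Or.inl (Reachable.refl _)
  | @tail b c h1 h2 ih =>
    rw [fromEdgeSet_adj] at h2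
    have hbc : s(b, c) ∈ insert s(u, v) A := by exact_mod_cast h2.1
    rcases Finset.mem_insert.1 hbc with heq | hmem
    · rcases Sym2.eq_iff.1 heq with ⟨rfl, rfl⟩ | ⟨rfl, rfl⟩
      · rcases ih with h3 | h3 | h3
        · exact Or.inr (Or.inl h3)
        · exact Or.inr (Or.inl h3)
        · exact Or.inr (Or.inr h3)
      · rcases ih with h3 | h3 | h3
        · exact Or.inr (Or.inr h3)
        · exact Or.inr (Or.inl h3)
        · exact Or.inr (Or.inr h3)
    · have hstep : (fromEdgeSet (A : Set (Sym2 V))).Reachable b c :=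
        Adj.reachable (by rw [fromEdgeSet_adj]; exact ⟨by exact_mod_cast hmem, h2.2⟩)
      rcases ih with h3 | h3 | h3
      · exact Or.inl (h3.trans hstep)
      · exact Or.inr (Or.inl h3)
      · exact Or.inr (Or.inr h3)

lemma reach_insert_endpoints :
    (fromEdgeSet ((insert s(u, v) A : Finset (Sym2 V)) : Set (Sym2 V))).Reachable u v ∨ u = v := by
  by_cases huv : u = v
  · exact Or.inr huv
  · refine Or.inl (Adj.reachable ?_)
    rw [fromEdgeSet_adj]
    exact ⟨by exact_mod_cast Finset.mem_insert_self _ _, huv⟩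

lemma card_comp_insert (h : ¬ (fromEdgeSet (A : Set (Sym2 V))).Reachable u v) :
    (comp (insert s(u, v) A)).card + 1 = (comp A).card := by
  have huv : u ≠ v := fun he => h (he ▸ Reachable.refl u)
  set A' := insert s(u, v) A with hA'
  have hruv : (fromEdgeSet (A' : Set (Sym2 V))).Reachable u v := by
    rcases reach_insert_endpoints (A := A) (u := u) (v := v) with h1 | h1
    · exact h1
    · exact absurd h1 huv
  have hmono : ∀ x y : V, (fromEdgeSet (A : Set (Sym2 V))).Reachable x y →
      (fromEdgeSet (A' : Set (Sym2 V))).Reachable x y :=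
    fun x y h2 => h2.mono (fromEdgeSet_mono (by exact_mod_cast Finset.subset_insert _ _))
  set S := (comp A).filter (fun B => u ∉ B ∧ v ∉ B) with hS
  -- cls A' x = cls A x when x doesn't reach u nor v in A
  have hcls_eq : ∀ x : V, ¬ (fromEdgeSet (A : Set (Sym2 V))).Reachable x u →
      ¬ (fromEdgeSet (A : Set (Sym2 V))).Reachable x v → cls A' x = cls A x := by
    intro x hxu hxv
    ext w
    rw [mem_cls, mem_cls]
    constructor
    · intro hw
      rcases reach_insert_cases (hA' ▸ hw) with h3 | h3 | h3
      · exact h3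
      · exact absurd h3 hxu
      · exact absurd h3 hxv
    · exact hmono x w
  have key1 : comp A = insert (cls A u) (insert (cls A v) S) := by
    ext B
    constructor
    · intro hB
      obtain ⟨x, rfl⟩ := mem_comp.1 hB
      by_cases hxu : (fromEdgeSet (A : Set (Sym2 V))).Reachable x u
      · exact Finset.mem_insert.2 (Or.inl (cls_eq_of_reachable hxu))
      by_cases hxv : (fromEdgeSet (A : Set (Sym2 V))).Reachable x v
      · exact Finset.mem_insert.2 (Or.inr (Finset.mem_insert.2 (Or.inl
          (cls_eq_of_reachable hxv))))
      · refine Finset.mem_insert.2 (Or.inr (Finset.mem_insert.2 (Or.inr ?_)))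
        refine Finset.mem_filter.2 ⟨hB, fun hu => hxu (mem_cls.1 hu), fun hv => hxv (mem_cls.1 hv)⟩
    · intro hB
      rcases Finset.mem_insert.1 hB with rfl | hB2
      · exact mem_comp.2 ⟨u, rfl⟩
      rcases Finset.mem_insert.1 hB2 with rfl | hB3
      · exact mem_comp.2 ⟨v, rfl⟩
      · exact Finset.mem_filter.1 hB3 |>.1
  have key2 : comp A' = insert (cls A' u) S := by
    ext B
    constructor
    · intro hB
      obtain ⟨x, rfl⟩ := mem_comp.1 hB
      by_cases hxu : (fromEdgeSet (A' : Set (Sym2 V))).Reachable x u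
      · exact Finset.mem_insert.2 (Or.inl (cls_eq_of_reachable hxu))
      · have hxu' : ¬ (fromEdgeSet (A : Set (Sym2 V))).Reachable x u :=
          fun h3 => hxu (hmono x u h3)
        have hxv' : ¬ (fromEdgeSet (A : Set (Sym2 V))).Reachable x v := by
          intro h3
          exact hxu ((hmono x v h3).trans hruv.symm)
        refine Finset.mem_insert.2 (Or.inr ?_)
        rw [hcls_eq x hxu' hxv']
        refine Finset.mem_filter.2 ⟨mem_comp.2 ⟨x, rfl⟩,
          fun hu => hxu' (mem_cls.1 hu), fun hv => hxv' (mem_cls.1 hv)⟩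
    · intro hB
      rcases Finset.mem_insert.1 hB with rfl | hB2
      · exact mem_comp.2 ⟨u, rfl⟩
      · obtain ⟨hBc, hu, hv⟩ := Finset.mem_filter.1 hB2
        obtain ⟨x, rfl⟩ := mem_comp.1 hBc
        have hxu' : ¬ (fromEdgeSet (A : Set (Sym2 V))).Reachable x u :=
          fun h3 => hu (mem_cls.2 h3)
        have hxv' : ¬ (fromEdgeSet (A : Set (Sym2 V))).Reachable x v :=
          fun h3 => hv (mem_cls.2 h3)
        exact mem_comp.2 ⟨x, hcls_eq x hxu' hxv'⟩
  have n1 : cls A u ∉ insert (cls A v) S := by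
    intro hmem
    rcases Finset.mem_insert.1 hmem with heq | hmem2
    · exact h (cls_eq_iff.1 heq)
    · exact (Finset.mem_filter.1 hmem2).2.1 self_mem_cls
  have n2 : cls A v ∉ S := fun hmem => (Finset.mem_filter.1 hmem).2.2 self_mem_cls
  have n3 : cls A' u ∉ S := fun hmem => (Finset.mem_filter.1 hmem).2.1 self_mem_cls
  rw [key1, key2, Finset.card_insert_of_notMem n1, Finset.card_insert_of_notMem n2,
    Finset.card_insert_of_notMem n3]

lemma card_comp_insert_le (e : Sym2 V) :
    (comp (insert e A)).card ≤ (comp A).card ∧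
      (comp A).card ≤ (comp (insert e A)).card + 1 := by
  induction e using Sym2.ind with
  | _ u v =>
    by_cases h : (fromEdgeSet (A : Set (Sym2 V))).Reachable u v
    · rw [comp_insert_of_reachable h]
      omega
    · have := card_comp_insert h
      omega

lemma card_comp_union_le (A C : Finset (Sym2 V)) :
    (comp (A ∪ C)).card ≤ (comp A).card := by
  induction C using Finset.induction_on with
  | empty => rw [Finset.union_empty]
  | @insert e C he ih =>
    rw [Finset.union_insert]
    exact le_trans (card_comp_insert_le e).1 ih

lemma card_comp_mono {A B : Finset (Sym2 V)} (h : A ⊆ B) :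
    (comp B).card ≤ (comp A).card := by
  have := card_comp_union_le A B
  rwa [Finset.union_eq_right.2 h] at this

lemma semimod (F A : Finset (Sym2 V)) (hFA : F ⊆ A) (C : Finset (Sym2 V)) :
    (comp A).card + (comp (F ∪ C)).card ≤ (comp (A ∪ C)).card + (comp F).card := by
  induction C using Finset.induction_on with
  | empty => rw [Finset.union_empty, Finset.union_empty]
  | @insert e C he ih =>
    have hAu : A ∪ insert e C = insert e (A ∪ C) := by
      rw [Finset.union_insert]
    have hFu : F ∪ insert e C = insert e (F ∪ C) := by
      rw [Finset.union_insert]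
    rw [hAu, hFu]
    induction e using Sym2.ind with
    | _ u v =>
      by_cases hr : (fromEdgeSet ((F ∪ C : Finset (Sym2 V)) : Set (Sym2 V))).Reachable u v
      · rw [comp_insert_of_reachable hr, comp_insert_of_reachable
          (hr.mono (fromEdgeSet_mono (by
            exact_mod_cast Finset.union_subset_union hFA (Finset.Subset.refl C))))]
        exact ih
      · have h1 := card_comp_insert hr
        have h2 := card_comp_insert_le (A := A ∪ C) s(u, v)
        omega

end Counting

section Flats

variable (G : SimpleGraph V)

lemma mem_connParts {P : Finset (Finset V)} : P ∈ connParts G ↔ IsConnPartition G P := by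
  simp [connParts]

abbrev Flat := {P : Finset (Finset V) // P ∈ connParts G}

noncomputable def FF (x : Flat G) : Finset (Sym2 V) := FE G x.1

lemma FF_subset (x : Flat G) : FF G x ⊆ G.edgeFinset := FE_subset _ _

noncomputable def cmp (A : Finset (Sym2 V)) : Flat G :=
  ⟨comp (A ∩ G.edgeFinset), (mem_connParts G).2 (connParts_comp inter_subset_right)⟩

lemma cmp_val {A : Finset (Sym2 V)} (hA : A ⊆ G.edgeFinset) : (cmp G A).1 = comp A := by
  simp only [cmp, Finset.inter_eq_left.2 hA]

lemma cmp_FF (x : Flat G) : cmp G (FF G x) = x := by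
  apply Subtype.ext
  rw [cmp_val G (FF_subset G x)]
  exact comp_FE ((mem_connParts G).1 x.2)

lemma FF_inj {x y : Flat G} (h : FF G x = FF G y) : x = y := by
  have h2 := cmp_FF G x
  rw [h, cmp_FF G y] at h2
  exact h2.symm

variable {G}

lemma ga1 {A : Finset (Sym2 V)} (hA : A ⊆ G.edgeFinset) : A ⊆ FF G (cmp G A) := by
  have : FF G (cmp G A) = FE G (comp A) := by rw [FF, cmp_val G hA]
  rw [this]
  exact subset_FE_comp hA

lemma ga2 {A : Finset (Sym2 V)} {w : Flat G} (hA : A ⊆ FF G w) : FF G (cmp G A) ⊆ FF G w := by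
  have hAE : A ⊆ G.edgeFinset := hA.trans (FF_subset G w)
  have : FF G (cmp G A) = FE G (comp A) := by rw [FF, cmp_val G hAE]
  rw [this]
  exact FE_comp_subset ((mem_connParts G).1 w.2).1 hA

lemma cmp_le_iff {A : Finset (Sym2 V)} (hA : A ⊆ G.edgeFinset) {w : Flat G} :
    FF G (cmp G A) ⊆ FF G w ↔ A ⊆ FF G w :=
  ⟨fun h => (ga1 hA).trans h, ga2⟩

lemma card_comp_FF (x : Flat G) : (comp (FF G x)).card = x.1.card := by
  rw [FF, comp_FE ((mem_connParts G).1 x.2)]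

lemma not_reach_of_not_mem_FF {x : Flat G} {u v : V} (hne : s(u, v) ∉ FF G x)
    (hadj : G.Adj u v) : ¬ (fromEdgeSet ((FF G x : Finset (Sym2 V)) : Set (Sym2 V))).Reachable u v := by
  intro hr
  refine hne ?_
  have hmem : v ∈ cls (FF G x) u := mem_cls.2 hr
  have hB : cls (FF G x) u ∈ comp (FF G x) := mem_comp.2 ⟨u, rfl⟩
  rw [FF, comp_FE ((mem_connParts G).1 x.2)] at hB
  exact mem_FE.2 ⟨hadj, cls (FF G x) u, hB, self_mem_cls, hmem⟩

lemma card_comp_insert_FF {x : Flat G} {e : Sym2 V} (he : e ∈ G.edgeFinset)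
    (hne : e ∉ FF G x) : (comp (insert e (FF G x))).card + 1 = x.1.card := by
  revert he hne
  induction e using Sym2.ind with
  | _ u v =>
    intro he hne
    have hadj : G.Adj u v := by rwa [mem_edgeFinset, mem_edgeSet] at he
    rw [card_comp_insert (not_reach_of_not_mem_FF hne hadj), card_comp_FF]

lemma card_cmp_insert {x : Flat G} {e : Sym2 V} (he : e ∈ G.edgeFinset)
    (hne : e ∉ FF G x) : (cmp G (insert e (FF G x))).1.card + 1 = x.1.card := by
  rw [cmp_val G (Finset.insert_subset he (FF_subset G x))]
  exact card_comp_insert_FF he hne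

lemma flat_card_le {x y : Flat G} (h : FF G x ⊆ FF G y) : y.1.card ≤ x.1.card := by
  rw [← card_comp_FF x, ← card_comp_FF y]
  exact card_comp_mono h

lemma flat_card_lt {x y : Flat G} (h : FF G x ⊆ FF G y) (hne : x ≠ y) :
    y.1.card < x.1.card := by
  have hFne : FF G x ≠ FF G y := fun h2 => hne (FF_inj G h2)
  obtain ⟨e, heY, heX⟩ := Finset.exists_of_ssubset (ssubset_of_subset_of_ne h hFne)
  have h1 : (comp (insert e (FF G x))).card + 1 = x.1.card :=
    card_comp_insert_FF (FF_subset G y heY) heX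
  have h2 : (comp (FF G y)).card ≤ (comp (insert e (FF G x))).card :=
    card_comp_mono (Finset.insert_subset heY h)
  rw [card_comp_FF] at h2
  omega

lemma flat_semimod {y z a : Flat G} (h1 : FF G y ⊆ FF G z) (h2 : FF G y ⊆ FF G a) :
    z.1.card + a.1.card ≤ (comp (FF G z ∪ FF G a)).card + y.1.card := by
  have := semimod (FF G y) (FF G z) h1 ((FF G a) \ (FF G y))
  have hu : FF G z ∪ (FF G a \ FF G y) = FF G z ∪ FF G a := by
    ext e
    simp only [Finset.mem_union, Finset.mem_sdiff]
    constructor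
    · rintro (h | ⟨h, -⟩)
      · exact Or.inl h
      · exact Or.inr h
    · rintro (h | h)
      · exact Or.inl h
      · by_cases hy : e ∈ FF G y
        · exact Or.inl (h1 hy)
        · exact Or.inr ⟨h, hy⟩
  have hu2 : FF G y ∪ (FF G a \ FF G y) = FF G a := by
    rw [Finset.union_sdiff_self_eq_union, Finset.union_eq_right.2 h2]
  rw [hu, hu2] at this
  rw [← card_comp_FF z, ← card_comp_FF a, ← card_comp_FF y]
  omega

end Flats

lemma sum_pow_neg_one {α : Type*} [DecidableEq α] (s : Finset α) :
    ∑ A ∈ s.powerset, (-1 : ℚ) ^ A.card = if s = ∅ then 1 else 0 := by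
  induction s using Finset.induction_on with
  | empty => simp
  | @insert a s ha ih =>
    rw [Finset.sum_powerset_insert ha, if_neg (Finset.insert_ne_empty a s)]
    have : ∀ t ∈ s.powerset, (-1 : ℚ) ^ (insert a t).card = -(-1 : ℚ) ^ t.card := by
      intro t ht
      rw [Finset.card_insert_of_notMem (fun hc => ha ((Finset.mem_powerset.1 ht) hc)),
        pow_succ]
      ring
    rw [Finset.sum_congr rfl this, Finset.sum_neg_distrib]
    ring

section Mobius

variable (G : SimpleGraph V)

noncomputable def ze : Matrix (Flat G) (Flat G) ℚ :=
  Matrix.of fun x z => if FF G x ⊆ FF G z then 1 else 0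

noncomputable def mo : Matrix (Flat G) (Flat G) ℚ :=
  Matrix.of fun y z => ∑ A ∈ (G.edgeFinset \ FF G y).powerset,
    if cmp G (FF G y ∪ A) = z then (-1 : ℚ) ^ A.card else 0

lemma mo_mul_ze : mo G * ze G = 1 := by
  ext y w
  rw [Matrix.mul_apply]
  have step1 : ∀ z : Flat G, mo G y z * ze G z w =
      ∑ A ∈ (G.edgeFinset \ FF G y).powerset,
        if cmp G (FF G y ∪ A) = z then (-1 : ℚ) ^ A.card * ze G z w else 0 := by
    intro z
    rw [mo, Matrix.of_apply, Finset.sum_mul]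
    refine Finset.sum_congr rfl fun A hA => ?_
    split_ifs <;> simp
  rw [Finset.sum_congr rfl (fun z _ => step1 z), Finset.sum_comm]
  have step2 : ∀ A ∈ (G.edgeFinset \ FF G y).powerset,
      (∑ z : Flat G, if cmp G (FF G y ∪ A) = z then (-1 : ℚ) ^ A.card * ze G z w else 0)
        = (-1 : ℚ) ^ A.card * (if FF G y ∪ A ⊆ FF G w then 1 else 0) := by
    intro A hA
    rw [Finset.sum_ite_eq]
    simp only [Finset.mem_univ, if_true]
    have hAE : FF G y ∪ A ⊆ G.edgeFinset :=
      Finset.union_subset (FF_subset G y)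
        ((Finset.mem_powerset.1 hA).trans Finset.sdiff_subset)
    rw [ze, Matrix.of_apply]
    by_cases hc : FF G y ∪ A ⊆ FF G w
    · rw [if_pos ((cmp_le_iff hAE).2 hc), if_pos hc]
    · rw [if_neg (fun h => hc ((cmp_le_iff hAE).1 h)), if_neg hc]
  rw [Finset.sum_congr rfl step2]
  by_cases hyw : FF G y ⊆ FF G w
  · have hsub : (FF G w \ FF G y).powerset ⊆ (G.edgeFinset \ FF G y).powerset :=
      Finset.powerset_mono.2 (Finset.sdiff_subset_sdiff (FF_subset G w) (Finset.Subset.refl _))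
    have h0 : ∀ A ∈ (G.edgeFinset \ FF G y).powerset, A ∉ (FF G w \ FF G y).powerset →
        ((-1 : ℚ) ^ A.card * (if FF G y ∪ A ⊆ FF G w then 1 else 0)) = 0 := by
      intro A hA hA2
      rw [if_neg, mul_zero]
      intro hc
      refine hA2 (Finset.mem_powerset.2 (Finset.subset_sdiff.2 ⟨?_, ?_⟩))
      · exact (Finset.subset_union_right).trans hc
      · have := Finset.mem_powerset.1 hA
        rw [Finset.subset_sdiff] at this
        exact this.2
    rw [← Finset.sum_subset hsub h0]
    have hall : ∀ A ∈ (FF G w \ FF G y).powerset,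
        ((-1 : ℚ) ^ A.card * (if FF G y ∪ A ⊆ FF G w then 1 else 0)) = (-1 : ℚ) ^ A.card := by
      intro A hA
      rw [if_pos (Finset.union_subset hyw ((Finset.mem_powerset.1 hA).trans
        Finset.sdiff_subset)), mul_one]
    rw [Finset.sum_congr rfl hall, sum_pow_neg_one]
    have hiff : (FF G w \ FF G y = ∅) ↔ y = w := by
      rw [Finset.sdiff_eq_empty_iff_subset]
      constructor
      · intro h
        exact FF_inj G (Finset.Subset.antisymm hyw h)
      · rintro rfl
        exact Finset.Subset.refl _
    rw [Matrix.one_apply]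
    simp only [hiff]
  · have hz : ∀ A ∈ (G.edgeFinset \ FF G y).powerset,
        ((-1 : ℚ) ^ A.card * (if FF G y ∪ A ⊆ FF G w then 1 else 0)) = 0 := by
      intro A hA
      rw [if_neg (fun hc => hyw ((Finset.subset_union_left).trans hc)), mul_zero]
    rw [Finset.sum_congr rfl hz, Finset.sum_const_zero, Matrix.one_apply_ne]
    intro h
    exact hyw (h ▸ Finset.Subset.refl _)

lemma ze_mul_mo : ze G * mo G = 1 := mul_eq_one_comm.2 (mo_mul_ze G)

lemma moze (y w : Flat G) :
    ∑ z : Flat G, mo G y z * ze G z w = if y = w then 1 else 0 := by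
  have h := congrFun (congrFun (mo_mul_ze G) y) w
  rwa [Matrix.mul_apply, Matrix.one_apply] at h

lemma zemo (x w : Flat G) :
    ∑ z : Flat G, ze G x z * mo G z w = if x = w then 1 else 0 := by
  have h := congrFun (congrFun (ze_mul_mo G) x) w
  rwa [Matrix.mul_apply, Matrix.one_apply] at h

lemma mo_eq_zero {y z : Flat G} (h : ¬ FF G y ⊆ FF G z) : mo G y z = 0 := by
  rw [mo, Matrix.of_apply]
  refine Finset.sum_eq_zero fun A hA => ?_
  rw [if_neg]
  rintro rfl
  have hAE : FF G y ∪ A ⊆ G.edgeFinset :=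
    Finset.union_subset (FF_subset G y)
      ((Finset.mem_powerset.1 hA).trans Finset.sdiff_subset)
  exact h ((Finset.subset_union_left).trans (ga1 hAE))

lemma mo_self (y : Flat G) : mo G y y = 1 := by
  rw [mo, Matrix.of_apply]
  rw [Finset.sum_eq_single ∅]
  · rw [Finset.union_empty, cmp_FF, if_pos rfl, Finset.card_empty, pow_zero]
  · intro A hA hAne
    rw [if_neg]
    intro hcy
    have hAE : FF G y ∪ A ⊆ G.edgeFinset :=
      Finset.union_subset (FF_subset G y)
        ((Finset.mem_powerset.1 hA).trans Finset.sdiff_subset)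
    have h1 : A ⊆ FF G y := by
      have h3 := (Finset.subset_union_right).trans (ga1 hAE)
      rwa [hcy] at h3
    have h2 := Finset.mem_powerset.1 hA
    refine hAne (Finset.eq_empty_iff_forall_notMem.2 fun x hx => ?_)
    exact (Finset.mem_sdiff.1 (h2 hx)).2 (h1 hx)
  · intro h
    exact absurd (Finset.empty_mem_powerset _) h

lemma join_ind (x b w : Flat G) :
    (∑ u : Flat G, if FF G x ⊆ FF G u ∧ FF G b ⊆ FF G u then mo G u w else 0)
      = if cmp G (FF G x ∪ FF G b) = w then 1 else 0 := by
  have hAE : FF G x ∪ FF G b ⊆ G.edgeFinset :=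
    Finset.union_subset (FF_subset G x) (FF_subset G b)
  have hcond : ∀ u : Flat G, (FF G x ⊆ FF G u ∧ FF G b ⊆ FF G u) ↔
      FF G (cmp G (FF G x ∪ FF G b)) ⊆ FF G u := by
    intro u
    rw [cmp_le_iff hAE, Finset.union_subset_iff]
  have step : ∀ u : Flat G, (if FF G x ⊆ FF G u ∧ FF G b ⊆ FF G u then mo G u w else 0)
      = ze G (cmp G (FF G x ∪ FF G b)) u * mo G u w := by
    intro u
    rw [ze, Matrix.of_apply]
    by_cases hc : FF G (cmp G (FF G x ∪ FF G b)) ⊆ FF G u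
    · rw [if_pos ((hcond u).2 hc), if_pos hc, one_mul]
    · rw [if_neg (fun h => hc ((hcond u).1 h)), if_neg hc, zero_mul]
  rw [Finset.sum_congr rfl (fun u _ => step u), zemo]

lemma weisner {y a w : Flat G} (h1 : FF G y ⊆ FF G a) (h2 : FF G a ⊆ FF G w) (hne : a ≠ y) :
    ∑ z : Flat G, (if cmp G (FF G z ∪ FF G a) = w then mo G y z else 0) = 0 := by
  have key : ∀ z : Flat G, (if cmp G (FF G z ∪ FF G a) = w then mo G y z else 0)
      = ∑ u : Flat G, (mo G y z * ze G z u) * (ze G a u * mo G u w) := by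
    intro z
    have e1 : ∀ u : Flat G, (mo G y z * ze G z u) * (ze G a u * mo G u w)
        = mo G y z * (if FF G z ⊆ FF G u ∧ FF G a ⊆ FF G u then mo G u w else 0) := by
      intro u
      rw [ze, Matrix.of_apply, Matrix.of_apply]
      by_cases hc1 : FF G z ⊆ FF G u <;> by_cases hc2 : FF G a ⊆ FF G u <;>
        simp [hc1, hc2]
    rw [Finset.sum_congr rfl (fun u _ => e1 u), ← Finset.mul_sum, join_ind]
    by_cases hc : cmp G (FF G z ∪ FF G a) = w
    · rw [if_pos hc, if_pos hc, mul_one]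
    · rw [if_neg hc, if_neg hc, mul_zero]
  rw [Finset.sum_congr rfl (fun z _ => key z), Finset.sum_comm]
  have inner : ∀ u : Flat G,
      (∑ z : Flat G, (mo G y z * ze G z u) * (ze G a u * mo G u w))
        = (if y = u then 1 else 0) * (ze G a u * mo G u w) := by
    intro u
    rw [← Finset.sum_mul, moze]
  rw [Finset.sum_congr rfl (fun u _ => inner u)]
  have final : ∀ u : Flat G, (if y = u then 1 else 0) * (ze G a u * mo G u w)
      = if y = u then ze G a u * mo G u w else 0 := by
    intro u
    split_ifs <;> simp
  rw [Finset.sum_congr rfl (fun u _ => final u), Finset.sum_ite_eq]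
  simp only [Finset.mem_univ, if_true]
  have : ze G a y = 0 := by
    rw [ze, Matrix.of_apply, if_neg]
    intro hc
    exact hne (FF_inj G (Finset.Subset.antisymm hc h1))
  rw [this, zero_mul]

lemma mo_recursion {y a w : Flat G} (h1 : FF G y ⊆ FF G a) (h2 : FF G a ⊆ FF G w)
    (hne : a ≠ y) :
    mo G y w = - ∑ z ∈ Finset.univ.erase w,
      (if cmp G (FF G z ∪ FF G a) = w then mo G y z else 0) := by
  have hw := weisner (G := G) h1 h2 hne
  rw [← Finset.add_sum_erase Finset.univ _ (Finset.mem_univ w)] at hw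
  have hfw : (if cmp G (FF G w ∪ FF G a) = w then mo G y w else 0) = mo G y w := by
    rw [if_pos]
    rw [Finset.union_eq_left.2 h2, cmp_FF]
  rw [hfw] at hw
  linarith

end Mobius

section Sign

variable {G : SimpleGraph V}

lemma card_of_join {y a z w : Flat G} (hyz : FF G y ⊆ FF G z) (hya : FF G y ⊆ FF G a)
    (hca : a.1.card + 1 = y.1.card) (hj : cmp G (FF G z ∪ FF G a) = w) (hzw : z ≠ w) :
    z.1.card = w.1.card + 1 := by
  have hAE : FF G z ∪ FF G a ⊆ G.edgeFinset :=
    Finset.union_subset (FF_subset G z) (FF_subset G a)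
  have hzW : FF G z ⊆ FF G w := by
    have h := (Finset.subset_union_left).trans (ga1 hAE)
    rwa [hj] at h
  have hlow : w.1.card < z.1.card := flat_card_lt hzW hzw
  have hsm := flat_semimod hyz hya
  have hcval : (comp (FF G z ∪ FF G a)).card = w.1.card := by
    rw [← cmp_val G hAE, hj]
  omega

lemma exists_compl {y a w : Flat G} (h1 : FF G y ⊆ FF G a) (h2 : FF G a ⊆ FF G w)
    (hne : a ≠ y) :
    ∃ z : Flat G, FF G y ⊆ FF G z ∧ z ≠ w ∧ cmp G (FF G z ∪ FF G a) = w := by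
  set Z := Finset.univ.filter (fun z : Flat G =>
    FF G y ⊆ FF G z ∧ FF G z ⊆ FF G w ∧ ¬ FF G a ⊆ FF G z) with hZ
  have hyZ : y ∈ Z := by
    refine Finset.mem_filter.2 ⟨Finset.mem_univ _, Finset.Subset.refl _, h1.trans h2, ?_⟩
    intro hc
    exact hne (FF_inj G (Finset.Subset.antisymm hc h1))
  obtain ⟨z, hzZ, hmin⟩ := Finset.exists_min_image Z (fun z => z.1.card) ⟨y, hyZ⟩
  obtain ⟨-, hyz, hzw, haz⟩ := Finset.mem_filter.1 hzZ
  refine ⟨z, hyz, fun hzw' => haz (by rw [hzw']; exact h2), ?_⟩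
  by_contra hj
  set j := cmp G (FF G z ∪ FF G a) with hjdef
  have hAE : FF G z ∪ FF G a ⊆ G.edgeFinset :=
    Finset.union_subset (FF_subset G z) (FF_subset G a)
  have hjw : FF G j ⊆ FF G w := ga2 (Finset.union_subset hzw h2)
  have hFjne : FF G j ≠ FF G w := fun hc => hj (FF_inj G hc)
  obtain ⟨e, hew, hej⟩ := Finset.exists_of_ssubset (ssubset_of_subset_of_ne hjw hFjne)
  have hzj : FF G z ⊆ FF G j := (Finset.subset_union_left).trans (ga1 hAE)
  have haj : FF G a ⊆ FF G j := (Finset.subset_union_right).trans (ga1 hAE)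
  have hyj : FF G y ⊆ FF G j := hyz.trans hzj
  have hey : e ∉ FF G y := fun hc => hej (hyj hc)
  set p := cmp G (insert e (FF G y)) with hpdef
  have hins_sub : insert e (FF G y) ⊆ G.edgeFinset :=
    Finset.insert_subset (FF_subset G w hew) (FF_subset G y)
  have hyp : FF G y ⊆ FF G p := (Finset.subset_insert _ _).trans (ga1 hins_sub)
  have hep : e ∈ FF G p := ga1 hins_sub (Finset.mem_insert_self _ _)
  have hpw : FF G p ⊆ FF G w := ga2 (Finset.insert_subset hew (hyz.trans hzw))
  set z' := cmp G (FF G z ∪ FF G p) with hz'def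
  have hAE2 : FF G z ∪ FF G p ⊆ G.edgeFinset :=
    Finset.union_subset (FF_subset G z) (FF_subset G p)
  have hzz' : FF G z ⊆ FF G z' := (Finset.subset_union_left).trans (ga1 hAE2)
  have hpz' : FF G p ⊆ FF G z' := (Finset.subset_union_right).trans (ga1 hAE2)
  have hz'w : FF G z' ⊆ FF G w := ga2 (Finset.union_subset hzw hpw)
  have hz'ne : z' ≠ z := by
    intro hc
    have he' : e ∈ FF G z := by rw [← hc]; exact hpz' hep
    exact hej (hzj he')
  have hcz' : z'.1.card + 1 = z.1.card := by
    have hlt : z'.1.card < z.1.card := flat_card_lt hzz' (fun hc => hz'ne hc.symm)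
    have hsm := flat_semimod hyz hyp
    have hcv : (comp (FF G z ∪ FF G p)).card = z'.1.card := by rw [← cmp_val G hAE2]
    have hcp : p.1.card + 1 = y.1.card := card_cmp_insert (FF_subset G w hew) hey
    omega
  have haz' : ¬ FF G a ⊆ FF G z' := by
    intro haz'
    have hjz' : FF G j ⊆ FF G z' := ga2 (Finset.union_subset hzz' haz')
    have hjnez : j ≠ z := by
      intro hc
      rw [hc] at haj
      exact haz haj
    have hcj : j.1.card < z.1.card := flat_card_lt hzj (fun hc => hjnez hc.symm)
    set j' := cmp G (FF G j ∪ FF G p) with hj'def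
    have hAE3 : FF G j ∪ FF G p ⊆ G.edgeFinset :=
      Finset.union_subset (FF_subset G j) (FF_subset G p)
    have hjj' : FF G j ⊆ FF G j' := (Finset.subset_union_left).trans (ga1 hAE3)
    have hpj' : FF G p ⊆ FF G j' := (Finset.subset_union_right).trans (ga1 hAE3)
    have hj'z' : FF G j' ⊆ FF G z' := ga2 (Finset.union_subset hjz' hpz')
    have hj'ne : j' ≠ j := by
      intro hc
      have he' : e ∈ FF G j := by rw [← hc]; exact hpj' hep
      exact hej he'
    have hcj' : j'.1.card < j.1.card := flat_card_lt hjj' (fun hc => hj'ne hc.symm)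
    have hle : z'.1.card ≤ j'.1.card := flat_card_le hj'z'
    omega
  have hz'Z : z' ∈ Z :=
    Finset.mem_filter.2 ⟨Finset.mem_univ _, hyz.trans hzz', hz'w, haz'⟩
  have := hmin z' hz'Z
  omega

lemma mo_pos (G : SimpleGraph V) : ∀ (d : ℕ) (y w : Flat G), FF G y ⊆ FF G w →
    y.1.card = w.1.card + d → 0 < (-1 : ℚ) ^ d * mo G y w := by
  intro d
  induction d with
  | zero =>
    intro y w hsub hcard
    have heq : y = w := by
      by_contra hne
      have := flat_card_lt hsub hne
      omega
    subst heq
    rw [mo_self, pow_zero, mul_one]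
    norm_num
  | succ n ih =>
    intro y w hsub hcard
    have hne : y ≠ w := by
      intro h
      subst h
      omega
    have hFne : FF G y ≠ FF G w := fun hc => hne (FF_inj G hc)
    obtain ⟨e, hew, hey⟩ := Finset.exists_of_ssubset (ssubset_of_subset_of_ne hsub hFne)
    set a := cmp G (insert e (FF G y)) with hadef
    have hins : insert e (FF G y) ⊆ G.edgeFinset :=
      Finset.insert_subset (FF_subset G w hew) (FF_subset G y)
    have hya : FF G y ⊆ FF G a := (Finset.subset_insert _ _).trans (ga1 hins)
    have hea : e ∈ FF G a := ga1 hins (Finset.mem_insert_self _ _)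
    have hane : a ≠ y := by
      intro hc
      rw [hc] at hea
      exact hey hea
    have haw : FF G a ⊆ FF G w := ga2 (Finset.insert_subset hew hsub)
    have hca : a.1.card + 1 = y.1.card := card_cmp_insert (FF_subset G w hew) hey
    have hrec := mo_recursion (G := G) hya haw hane
    have hterm : ∀ z ∈ Finset.univ.erase w,
        0 ≤ (-1 : ℚ) ^ n * (if cmp G (FF G z ∪ FF G a) = w then mo G y z else 0) := by
      intro z hz
      by_cases hcz : cmp G (FF G z ∪ FF G a) = w
      · rw [if_pos hcz]
        by_cases hyz : FF G y ⊆ FF G z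
        · have hzw : z ≠ w := Finset.ne_of_mem_erase hz
          have hczz := card_of_join hyz hya hca hcz hzw
          exact le_of_lt (ih y z hyz (by omega))
        · rw [mo_eq_zero G hyz, mul_zero]
      · rw [if_neg hcz, mul_zero]
    obtain ⟨z₀, hyz₀, hz₀w, hj₀⟩ := exists_compl hya haw hane
    have hz₀mem : z₀ ∈ Finset.univ.erase w := Finset.mem_erase.2 ⟨hz₀w, Finset.mem_univ _⟩
    have hpos : 0 < (-1 : ℚ) ^ n * (if cmp G (FF G z₀ ∪ FF G a) = w then mo G y z₀ else 0) := by
      rw [if_pos hj₀]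
      have hcz := card_of_join hyz₀ hya hca hj₀ hz₀w
      exact ih y z₀ hyz₀ (by omega)
    have hsum : 0 < ∑ z ∈ Finset.univ.erase w,
        (-1 : ℚ) ^ n * (if cmp G (FF G z ∪ FF G a) = w then mo G y z else 0) :=
      lt_of_lt_of_le hpos (Finset.single_le_sum hterm hz₀mem)
    have hgoal : (-1 : ℚ) ^ (n + 1) * mo G y w = ∑ z ∈ Finset.univ.erase w,
        (-1 : ℚ) ^ n * (if cmp G (FF G z ∪ FF G a) = w then mo G y z else 0) := by
      rw [hrec, ← Finset.mul_sum, pow_succ]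
      ring
    rw [hgoal]
    exact hsum

end Sign

section Top

variable {G : SimpleGraph V}

lemma cls_empty : cls (∅ : Finset (Sym2 V)) = fun v : V => {v} := by
  funext v
  ext w
  rw [mem_cls, Finset.coe_empty, fromEdgeSet_empty, Finset.mem_singleton]
  exact ⟨fun h => (reachable_bot.1 h).symm, fun h => by rw [h]⟩

lemma card_comp_empty : (comp (∅ : Finset (Sym2 V))).card = Fintype.card V := by
  rw [comp, cls_empty, Finset.card_image_of_injective _ (fun a b h => Finset.singleton_inj.1 h),
    Finset.card_univ]

lemma FF_tp : FF G (cmp G G.edgeFinset) = G.edgeFinset :=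
  Finset.Subset.antisymm (FF_subset _ _) (ga1 (Finset.Subset.refl _))

lemma card_tp (hV : Nonempty V) (hG : G.Connected) : (cmp G G.edgeFinset).1.card = 1 := by
  rw [cmp_val G (Finset.Subset.refl _)]
  have hcls : cls G.edgeFinset = fun _ : V => (Finset.univ : Finset V) := by
    funext v
    ext w
    rw [mem_cls, coe_edgeFinset, fromEdgeSet_edgeSet]
    simp [hG.preconnected v w]
  rw [comp, hcls, Finset.image_const Finset.univ_nonempty, Finset.card_singleton]

lemma flat_card_pos (hV : Nonempty V) (x : Flat G) : 1 ≤ x.1.card := by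
  obtain ⟨v⟩ := hV
  obtain ⟨B, ⟨hB, _⟩, _⟩ := ((mem_connParts G).1 x.2).1.2 v
  exact Finset.card_pos.2 ⟨B, hB⟩

lemma flat_card_le_n (x : Flat G) : x.1.card ≤ Fintype.card V := by
  have hFFbt : FF G (cmp G (∅ : Finset (Sym2 V))) = ∅ := by
    rw [Finset.eq_empty_iff_forall_notMem]
    intro e
    induction e using Sym2.ind with
    | _ u v =>
      intro he
      obtain ⟨hadj, B, hB, huB, hvB⟩ := mem_FE.1 he
      rw [cmp_val G (Finset.empty_subset _), comp, cls_empty] at hB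
      obtain ⟨w, -, hw⟩ := Finset.mem_image.1 hB
      subst hw
      rw [Finset.mem_singleton] at huB hvB
      exact hadj.ne (huB.trans hvB.symm)
  have hsub : FF G (cmp G (∅ : Finset (Sym2 V))) ⊆ FF G x := by
    rw [hFFbt]; exact Finset.empty_subset _
  have h1 := flat_card_le hsub
  have h2 : (cmp G (∅ : Finset (Sym2 V))).1.card = Fintype.card V := by
    rw [cmp_val G (Finset.empty_subset _), card_comp_empty]
  omega

end Top

section Core

variable {G : SimpleGraph V}

lemma core (hG : G.Connected) (hV : Nonempty V) (k : ℕ) :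
    (Finset.univ.filter (fun x : Flat G => Fintype.card V + 1 ≤ x.1.card + k)).card
      ≤ (Finset.univ.filter (fun x : Flat G => x.1.card ≤ k)).card := by
  set n := Fintype.card V with hn
  set R := Finset.univ.filter (fun x : Flat G => n + 1 ≤ x.1.card + k) with hR
  set C := Finset.univ.filter (fun x : Flat G => x.1.card ≤ k) with hC
  set tp := cmp G G.edgeFinset with htp
  set ν : Flat G → ℚ := fun z => mo G z tp with hν
  have hν_ne : ∀ z, ν z ≠ 0 := by
    intro z
    have h1 : FF G z ⊆ FF G tp := by rw [htp, FF_tp]; exact FF_subset G z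
    have h2 : z.1.card = tp.1.card + (z.1.card - 1) := by
      rw [htp, card_tp hV hG]
      have := flat_card_pos hV z
      omega
    have h3 := mo_pos G (z.1.card - 1) z tp h1 h2
    intro hc
    rw [hν] at hc
    simp only at hc
    rw [hc, mul_zero] at h3
    exact lt_irrefl _ h3
  set Em : Matrix (Flat G) (Flat G) ℚ := ze G * Matrix.diagonal ν * (ze G).transpose with hEm
  have hEm_apply : ∀ x b : Flat G,
      Em x b = if cmp G (FF G x ∪ FF G b) = tp then 1 else 0 := by
    intro x b
    rw [hEm, Matrix.mul_apply]
    have hstep : ∀ z : Flat G, (ze G * Matrix.diagonal ν) x z * (ze G).transpose z b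
        = if FF G x ⊆ FF G z ∧ FF G b ⊆ FF G z then mo G z tp else 0 := by
      intro z
      rw [Matrix.mul_diagonal, Matrix.transpose_apply, ze, Matrix.of_apply, Matrix.of_apply]
      by_cases h1 : FF G x ⊆ FF G z <;> by_cases h2 : FF G b ⊆ FF G z <;>
        simp [h1, h2, hν]
    rw [Finset.sum_congr rfl (fun z _ => hstep z), join_ind]
  have hinj : ∀ c : Flat G → ℚ, Matrix.vecMul c Em = 0 → c = 0 := by
    intro c hc
    rw [hEm, ← Matrix.vecMul_vecMul, ← Matrix.vecMul_vecMul] at hc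
    have h2 : Matrix.vecMul (Matrix.vecMul (Matrix.vecMul c (ze G)) (Matrix.diagonal ν))
        ((ze G).transpose * (mo G).transpose) = 0 := by
      rw [← Matrix.vecMul_vecMul, hc, Matrix.zero_vecMul]
    rw [← Matrix.transpose_mul, mo_mul_ze, Matrix.transpose_one, Matrix.vecMul_one] at h2
    have h3 : Matrix.vecMul c (ze G) = 0 := by
      funext z
      have h4 := congrFun h2 z
      rw [Matrix.vecMul_diagonal] at h4
      have h5 : Matrix.vecMul c (ze G) z * ν z = 0 := h4
      exact (mul_eq_zero.1 h5).resolve_right (hν_ne z)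
    have h4 := congrArg (fun v => Matrix.vecMul v (mo G)) h3
    rw [Matrix.vecMul_vecMul, ze_mul_mo, Matrix.vecMul_one, Matrix.zero_vecMul] at h4
    exact h4
  have hEzero : ∀ x b : Flat G, x ∈ R → b ∉ C → Em x b = 0 := by
    intro x b hxR hbC
    rw [hEm_apply, if_neg]
    intro hj
    have hAE : FF G x ∪ FF G b ⊆ G.edgeFinset :=
      Finset.union_subset (FF_subset G x) (FF_subset G b)
    have h1 : (comp (FF G x ∪ FF G b)).card = 1 := by
      rw [← cmp_val G hAE, hj, htp, card_tp hV hG]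
    have hsm := semimod ∅ (FF G x) (Finset.empty_subset _) (FF G b)
    rw [Finset.empty_union, card_comp_FF, card_comp_FF, card_comp_empty, h1] at hsm
    have hx : n + 1 ≤ x.1.card + k := (Finset.mem_filter.1 hxR).2
    have hb : ¬ b.1.card ≤ k := fun hc => hbC (Finset.mem_filter.2 ⟨Finset.mem_univ _, hc⟩)
    omega
  have hLI : LinearIndependent ℚ
      (fun (x : {x // x ∈ R}) => (fun b : {b // b ∈ C} => Em x.1 b.1)) := by
    rw [Fintype.linearIndependent_iff]
    intro g hg
    set c : Flat G → ℚ := fun x => if h : x ∈ R then g ⟨x, h⟩ else 0 with hcdef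
    have hcEm : Matrix.vecMul c Em = 0 := by
      funext b
      show ∑ x : Flat G, c x * Em x b = 0
      by_cases hbC : b ∈ C
      · have hgb := congrFun hg ⟨b, hbC⟩
        rw [Finset.sum_apply] at hgb
        simp only [Pi.smul_apply, smul_eq_mul, Pi.zero_apply] at hgb
        have e1 : ∑ x : Flat G, c x * Em x b = ∑ x ∈ R, c x * Em x b := by
          refine (Finset.sum_subset (Finset.subset_univ R) ?_).symm
          intro x _ hxR
          rw [hcdef]
          simp only
          rw [dif_neg hxR, zero_mul]
        have e2 : ∑ x ∈ R, c x * Em x b = ∑ x ∈ R.attach, c x.1 * Em x.1 b := by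
          rw [Finset.sum_attach R (fun x => c x * Em x b)]
        rw [e1, e2, ← hgb, ← Finset.univ_eq_attach]
        refine Finset.sum_congr rfl fun x _ => ?_
        rw [hcdef]
        simp only
        rw [dif_pos x.2]
      · refine Finset.sum_eq_zero fun x _ => ?_
        by_cases hxR : x ∈ R
        · rw [hEzero x b hxR hbC, mul_zero]
        · rw [hcdef]
          simp only
          rw [dif_neg hxR, zero_mul]
    have hc0 := hinj c hcEm
    intro i
    have h5 : c i.1 = 0 := congrFun hc0 i.1
    rw [hcdef] at h5
    simp only at h5
    rwa [dif_pos i.2] at h5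
  have hfin := hLI.fintype_card_le_finrank
  rwa [Module.finrank_pi, Fintype.card_coe, Fintype.card_coe] at hfin

end Core

end DW

open scoped Classical in
theorem dowling_wilson' {V : Type*} [Fintype V] [DecidableEq V]
    (G : SimpleGraph V) (hG : G.Connected) (k : ℕ)
    (hk1 : 1 ≤ k) (hk2 : k ≤ Fintype.card V)
    (qc : ℤ → ℕ) (hqc : ∀ i : ℤ, qc i = ((connParts G).filter (fun P => (P.card : ℤ) = i)).card) :
    ∑ i ∈ Finset.Icc 1 k, qc (i : ℤ)
      ≥ ∑ i ∈ Finset.range k, qc ((Fintype.card V : ℤ) - i) := by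
  classical
  have hn1 : 1 ≤ Fintype.card V := hk1.trans hk2
  have hV : Nonempty V := Fintype.card_pos_iff.1 (by omega)
  have hcore := DW.core (G := G) hG hV k
  have hCc : (Finset.univ.filter (fun x : DW.Flat G => x.1.card ≤ k)).card
      = ((connParts G).filter (fun P => P.card ≤ k)).card := by
    apply Finset.card_bij (fun (x : DW.Flat G) _ => x.1)
    · intro x hx
      exact Finset.mem_filter.2 ⟨x.2, (Finset.mem_filter.1 hx).2⟩
    · intro x _ y _ h
      exact Subtype.ext h
    · intro P hP
      exact ⟨⟨P, (Finset.mem_filter.1 hP).1⟩,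
        Finset.mem_filter.2 ⟨Finset.mem_univ _, (Finset.mem_filter.1 hP).2⟩, rfl⟩
  have hRc : (Finset.univ.filter
        (fun x : DW.Flat G => Fintype.card V + 1 ≤ x.1.card + k)).card
      = ((connParts G).filter (fun P => Fintype.card V + 1 ≤ P.card + k)).card := by
    apply Finset.card_bij (fun (x : DW.Flat G) _ => x.1)
    · intro x hx
      exact Finset.mem_filter.2 ⟨x.2, (Finset.mem_filter.1 hx).2⟩
    · intro x _ y _ h
      exact Subtype.ext h
    · intro P hP
      exact ⟨⟨P, (Finset.mem_filter.1 hP).1⟩,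
        Finset.mem_filter.2 ⟨Finset.mem_univ _, (Finset.mem_filter.1 hP).2⟩, rfl⟩
  have hLHS : ∑ i ∈ Finset.Icc 1 k, qc (i : ℤ)
      = ((connParts G).filter (fun P => P.card ≤ k)).card := by
    have hfib := Finset.card_eq_sum_card_fiberwise
      (f := Finset.card) (s := (connParts G).filter (fun P => P.card ≤ k))
      (t := Finset.Icc 1 k)
      (fun P hP => by
        obtain ⟨hP1, hP2⟩ := Finset.mem_filter.1 hP
        have h1 := DW.flat_card_pos hV (⟨P, hP1⟩ : DW.Flat G)
        exact Finset.mem_Icc.2 ⟨h1, hP2⟩)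
    rw [hfib]
    refine Finset.sum_congr rfl fun i hi => ?_
    obtain ⟨hi1, hi2⟩ := Finset.mem_Icc.1 hi
    rw [hqc]
    congr 1
    ext P
    constructor
    · intro h
      obtain ⟨hP, hPi⟩ := Finset.mem_filter.1 h
      have hPc : P.card = i := by exact_mod_cast hPi
      exact Finset.mem_filter.2 ⟨Finset.mem_filter.2 ⟨hP, by omega⟩, hPc⟩
    · intro h
      obtain ⟨h1, hPi⟩ := Finset.mem_filter.1 h
      obtain ⟨hP, hPk⟩ := Finset.mem_filter.1 h1
      exact Finset.mem_filter.2 ⟨hP, by exact_mod_cast hPi⟩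
  have hRHS : ∑ i ∈ Finset.range k, qc ((Fintype.card V : ℤ) - i)
      = ((connParts G).filter (fun P => Fintype.card V + 1 ≤ P.card + k)).card := by
    have hfib := Finset.card_eq_sum_card_fiberwise
      (f := Finset.card)
      (s := (connParts G).filter (fun P => Fintype.card V + 1 ≤ P.card + k))
      (t := Finset.Icc (Fintype.card V + 1 - k) (Fintype.card V))
      (fun P hP => by
        obtain ⟨hP1, hP2⟩ := Finset.mem_filter.1 hP
        have h1 := DW.flat_card_le_n (⟨P, hP1⟩ : DW.Flat G)
        exact Finset.mem_Icc.2 ⟨by omega, h1⟩)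
    rw [hfib]
    refine Finset.sum_nbij' (fun (i : ℕ) => Fintype.card V - i)
      (fun (j : ℕ) => Fintype.card V - j) ?_ ?_ ?_ ?_ ?_
    · intro i hi
      have hik := Finset.mem_range.1 hi
      exact Finset.mem_Icc.2 ⟨by omega, by omega⟩
    · intro j hj
      obtain ⟨hj1, hj2⟩ := Finset.mem_Icc.1 hj
      exact Finset.mem_range.2 (by omega)
    · intro i hi
      have hik := Finset.mem_range.1 hi
      omega
    · intro j hj
      obtain ⟨hj1, hj2⟩ := Finset.mem_Icc.1 hj
      omega
    · intro i hi
      have hik := Finset.mem_range.1 hi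
      rw [hqc]
      congr 1
      ext P
      constructor
      · intro h
        obtain ⟨hP, hPi⟩ := Finset.mem_filter.1 h
        have hPc : P.card = Fintype.card V - i := by omega
        exact Finset.mem_filter.2 ⟨Finset.mem_filter.2 ⟨hP, by omega⟩, hPc⟩
      · intro h
        obtain ⟨h1, hPc⟩ := Finset.mem_filter.1 h
        obtain ⟨hP, hPk⟩ := Finset.mem_filter.1 h1
        refine Finset.mem_filter.2 ⟨hP, ?_⟩
        omega
  rw [ge_iff_le, hRHS, hLHS]
  rw [hRc] at hcore
  rw [hCc] at hcore
  exact hcore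

/-- Dowling–Wilson inequality: for a connected graph with `n` vertices and every
`1 ≤ k ≤ n`, `Σ_{i=1}^{k} q_i(G) ≥ Σ_{i=0}^{k-1} q_{n-i}(G)`. -/
theorem dowling_wilson (G : SimpleGraph V) (hG : G.Connected) (k : ℕ)
    (hk1 : 1 ≤ k) (hk2 : k ≤ Fintype.card V) :
    ∑ i ∈ Finset.Icc 1 k, qcount G (i : ℤ)
      ≥ ∑ i ∈ Finset.range k, qcount G ((Fintype.card V : ℤ) - i) := by
  exact dowling_wilson' G hG k hk1 hk2 (qcount G) (fun i => rfl)
end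

section
/- Let G = (V,E) be a finite simple graph and let e = {u,v} ∈ E be a bridge of G (an edge whose removal increases the number of connected components). Then Q(G,x) = Q_{{e}}(G,x) + Q(G−e,x), where Q_{{e}}(G,x) = Σ x^{|π|} over all connected set partitions π of G in which u and v lie in the same block (this polynomial equals Q(G/e,x), the partition polynomial of the graph obtained by contracting e), and G−e is the graph obtained from G by deleting the edge e. -/
open Finset

variable {V : Type*} [Fintype V] [DecidableEq V]

open scoped Classical in
/-- Bridge decomposition: if `e = {u,v}` is a bridge of `G` then
`Q(G,x) = Q_{{e}}(G,x) + Q(G-e,x)`, where `Q_{{e}}(G,x)` sums `x^{|π|}` over the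
connected set partitions of `G` having `u` and `v` in a common block. -/
theorem bridge_decomposition (G : SimpleGraph V) (u v : V)
    (h : G.IsBridge s(u, v)) (x : ℤ) :
    Q G x
      = (∑ P ∈ (connParts G).filter (fun P => ∃ B ∈ P, u ∈ B ∧ v ∈ B), x ^ P.card)
        + Q (G.deleteEdges {s(u, v)}) x := by
  classical
  have key : (connParts G).filter (fun P => ¬ ∃ B ∈ P, u ∈ B ∧ v ∈ B)
      = connParts (G.deleteEdges {s(u, v)}) := by
    ext P
    simp only [Finset.mem_filter, connParts, IsConnPartition, Finset.mem_univ, true_and]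
    constructor
    · rintro ⟨⟨hpart, hconn⟩, hn⟩
      refine ⟨hpart, fun B hB => ?_⟩
      have heq : (G.deleteEdges {s(u, v)}).induce (B : Set V) = G.induce (B : Set V) := by
        ext a b
        simp only [SimpleGraph.comap_adj, Function.Embedding.coe_subtype,
          SimpleGraph.deleteEdges_adj, Set.mem_singleton_iff, Sym2.eq_iff,
          and_iff_left_iff_imp]
        intro hab hor
        rcases hor with ⟨ha, hb⟩ | ⟨ha, hb⟩
        · exact hn ⟨B, hB, ha ▸ a.2, hb ▸ b.2⟩
        · exact hn ⟨B, hB, hb ▸ b.2, ha ▸ a.2⟩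
      rw [heq]
      exact hconn B hB
    · rintro ⟨hpart, hconn⟩
      refine ⟨⟨hpart, fun B hB => ?_⟩, ?_⟩
      · exact (hconn B hB).mono (fun a b hab => (G.deleteEdges_le _) hab)
      · rintro ⟨B, hB, hu, hv⟩
        have hreach : ((G.deleteEdges {s(u, v)}).induce (B : Set V)).Reachable
            ⟨u, by exact_mod_cast hu⟩ ⟨v, by exact_mod_cast hv⟩ := (hconn B hB).preconnected _ _
        have : (G.deleteEdges {s(u, v)}).Reachable u v :=
          hreach.map ⟨Subtype.val, fun hab => hab⟩
        exact h this
  rw [Q, ← Finset.sum_filter_add_sum_filter_not (connParts G)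
    (fun P => ∃ B ∈ P, u ∈ B ∧ v ∈ B)]
  rw [key, Q]
end

section
/- Let C_n be the cycle graph on n ≥ 3 vertices. Then Q(C_n, x) = (1+x)^n − 1 − (n−1)x. -/
open Finset

variable {V : Type*} [Fintype V] [DecidableEq V]

namespace CycleProof

open SimpleGraph
open Fin.NatCast Fin.CommRing

variable {N : ℕ}

def arcSet (a : Fin (N+3)) (l : ℕ) : Finset (Fin (N+3)) :=
  (Finset.range (l+1)).image (fun k : ℕ => a + (k : Fin (N+3)))

lemma natCast_fin_inj {k k' : ℕ} (hk : k < N + 3) (hk' : k' < N + 3)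
    (h : (k : Fin (N+3)) = (k' : Fin (N+3))) : k = k' := by
  have := congrArg Fin.val h
  rwa [Fin.val_natCast, Fin.val_natCast, Nat.mod_eq_of_lt hk, Nat.mod_eq_of_lt hk'] at this

lemma mem_arcSet {a v : Fin (N+3)} {l : ℕ} :
    v ∈ arcSet a l ↔ ∃ k ≤ l, v = a + (k : Fin (N+3)) := by
  simp only [arcSet, mem_image, mem_range, Nat.lt_succ_iff]
  exact ⟨fun ⟨k, h1, h2⟩ => ⟨k, h1, h2.symm⟩, fun ⟨k, h1, h2⟩ => ⟨k, h1, h2.symm⟩⟩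

lemma arcSet_card {a : Fin (N+3)} {l : ℕ} (hl : l < N + 3) :
    (arcSet a l).card = l + 1 := by
  rw [arcSet, card_image_of_injOn, card_range]
  intro k hk k' hk' h
  simp only [coe_range, Set.mem_Iio] at hk hk'
  exact natCast_fin_inj (by omega) (by omega) (add_left_cancel h)

lemma arc_adj (u : Fin (N+3)) : (cycleGraph (N+3)).Adj u (u + 1) := by
  rw [cycleGraph_adj]
  right
  ring_nf

lemma arcSet_connected (a : Fin (N+3)) (l : ℕ) :
    ((cycleGraph (N+3)).induce (arcSet a l : Set (Fin (N+3)))).Connected := by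
  have ha : a ∈ arcSet a l := mem_arcSet.2 ⟨0, Nat.zero_le _, by simp⟩
  apply induce_connected_of_patches a ha
  intro v hv
  refine ⟨arcSet a l, le_refl _, ha, hv, ?_⟩
  have key : ∀ k : ℕ, k ≤ l → ∀ h : a + (k : Fin (N+3)) ∈ arcSet a l,
      ((cycleGraph (N+3)).induce (arcSet a l : Set (Fin (N+3)))).Reachable
        ⟨a, ha⟩ ⟨a + (k : Fin (N+3)), h⟩ := by
    intro k
    induction k with
    | zero =>
      intro _ h
      have : (⟨a + ((0:ℕ) : Fin (N+3)), h⟩ : (arcSet a l : Set (Fin (N+3)))) = ⟨a, ha⟩ :=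
        Subtype.ext (by simp)
      rw [this]
    | succ k ih =>
      intro hk h
      have hk' : k ≤ l := by omega
      have hmem : a + (k : Fin (N+3)) ∈ arcSet a l := mem_arcSet.2 ⟨k, hk', rfl⟩
      have hadj : ((cycleGraph (N+3)).induce (arcSet a l : Set (Fin (N+3)))).Adj
          ⟨a + (k : Fin (N+3)), hmem⟩ ⟨a + ((k+1 : ℕ) : Fin (N+3)), h⟩ := by
        rw [comap_adj]
        simp only [Function.Embedding.coe_subtype]
        have heq : a + ((k+1 : ℕ) : Fin (N+3)) = (a + (k : Fin (N+3))) + 1 := by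
          push_cast; ring
        rw [heq]
        exact arc_adj _
      exact (ih hk' hmem).trans hadj.reachable
  have hv' : (v : Fin (N+3)) ∈ arcSet a l := hv
  obtain ⟨k, hk, hveq⟩ := mem_arcSet.1 hv'
  have : (⟨v, hv⟩ : (arcSet a l : Set (Fin (N+3)))) = ⟨a + (k : Fin (N+3)), hveq ▸ hv⟩ := by
    simp [hveq]
  rw [this]
  exact key k hk _

def cutIdxSet (S : Finset (Fin (N+3))) (v : Fin (N+3)) : Set ℕ :=
  {k : ℕ | v - 1 - (k : Fin (N+3)) ∈ S}

noncomputable def cIdx (S : Finset (Fin (N+3))) (v : Fin (N+3)) : ℕ :=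
  sInf (cutIdxSet S v)

noncomputable def cpt (S : Finset (Fin (N+3))) (v : Fin (N+3)) : Fin (N+3) :=
  v - 1 - (cIdx S v : Fin (N+3))

lemma cutIdxSet_nonempty {S : Finset (Fin (N+3))} (hS : S.Nonempty) (v : Fin (N+3)) :
    (cutIdxSet S v).Nonempty := by
  obtain ⟨j, hj⟩ := hS
  refine ⟨(v - 1 - j).val, ?_⟩
  simp only [cutIdxSet, Set.mem_setOf_eq, Fin.cast_val_eq_self]
  simpa using hj

lemma cIdx_lt {S : Finset (Fin (N+3))} (hS : S.Nonempty) (v : Fin (N+3)) :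
    cIdx S v < N + 3 := by
  obtain ⟨j, hj⟩ := hS
  have h1 : (v - 1 - j).val ∈ cutIdxSet S v := by
    simp only [cutIdxSet, Set.mem_setOf_eq, Fin.cast_val_eq_self]; simpa using hj
  exact lt_of_le_of_lt (Nat.sInf_le h1) (Fin.is_lt _)

lemma cpt_mem {S : Finset (Fin (N+3))} (hS : S.Nonempty) (v : Fin (N+3)) :
    cpt S v ∈ S :=
  Nat.sInf_mem (cutIdxSet_nonempty hS v)

lemma cIdx_min {S : Finset (Fin (N+3))} {v : Fin (N+3)} {k : ℕ} (hk : k < cIdx S v) :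
    v - 1 - (k : Fin (N+3)) ∉ S :=
  Nat.notMem_of_lt_sInf hk

lemma cIdx_le {S : Finset (Fin (N+3))} {v : Fin (N+3)} {k : ℕ}
    (hk : v - 1 - (k : Fin (N+3)) ∈ S) : cIdx S v ≤ k :=
  Nat.sInf_le hk

lemma cpt_succ {S : Finset (Fin (N+3))} {i : Fin (N+3)} (hi : i ∈ S) :
    cpt S (i + 1) = i := by
  have h0 : cIdx S (i+1) = 0 := by
    apply Nat.le_antisymm _ (Nat.zero_le _)
    apply cIdx_le
    simpa using hi
  simp [cpt, h0]

/-- Key lemma: if `a-1 ∈ S`, no interior cuts, and `a+l ∈ S`, then the fiber of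
`cpt` at `a-1` is exactly the arc from `a` of length `l`. -/
lemma cpt_eq_iff {S : Finset (Fin (N+3))} (hS : S.Nonempty) (a : Fin (N+3)) (l : ℕ)
    (hl : l < N+3) (h0 : a - 1 ∈ S) (hmid : ∀ s : ℕ, s < l → a + (s : Fin (N+3)) ∉ S)
    (hend : a + (l : Fin (N+3)) ∈ S) (w : Fin (N+3)) :
    cpt S w = a - 1 ↔ w ∈ arcSet a l := by
  constructor
  · intro hcpt
    set t : ℕ := (w - a).val with ht
    have hwt : w = a + (t : Fin (N+3)) := by
      rw [ht, Fin.cast_val_eq_self]; ring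
    have htmem : t ∈ cutIdxSet S w := by
      simp only [cutIdxSet, Set.mem_setOf_eq, ht, Fin.cast_val_eq_self]
      have : w - 1 - (w - a) = a - 1 := by ring
      rwa [this]
    have hle : cIdx S w ≤ t := Nat.sInf_le htmem
    have hidx : cIdx S w = t := by
      have hc : ((cIdx S w : ℕ) : Fin (N+3)) = ((t : ℕ) : Fin (N+3)) := by
        have h1 : w - 1 - (cIdx S w : Fin (N+3)) = w - 1 - (t : Fin (N+3)) := by
          rw [show w - 1 - (cIdx S w : Fin (N+3)) = cpt S w from rfl, hcpt, ht,
            Fin.cast_val_eq_self]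
          ring
        linear_combination -h1
      exact natCast_fin_inj (lt_of_le_of_lt hle (Fin.is_lt _)) (Fin.is_lt _) hc
    have htl : t ≤ l := by
      by_contra hcon
      push_neg at hcon
      have hk : t - l - 1 < cIdx S w := by omega
      apply cIdx_min hk
      have hcast : ((t - l - 1 : ℕ) : Fin (N+3)) = (t : Fin (N+3)) - (l : Fin (N+3)) - 1 := by
        have : t - l - 1 = t - (l + 1) := by omega
        rw [this, Nat.cast_sub (by omega)]
        push_cast
        ring
      rw [hcast, hwt]
      have : a + (t:Fin (N+3)) - 1 - ((t:Fin (N+3)) - l - 1) = a + l := by ring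
      rwa [this]
    exact mem_arcSet.2 ⟨t, htl, hwt⟩
  · intro hw
    obtain ⟨t, htl, rfl⟩ := mem_arcSet.1 hw
    have hidx : cIdx S (a + (t : Fin (N+3))) = t := by
      have htmem : t ∈ cutIdxSet S (a + (t : Fin (N+3))) := by
        simp only [cutIdxSet, Set.mem_setOf_eq]
        have : a + (t:Fin (N+3)) - 1 - t = a - 1 := by ring
        rwa [this]
      have hle : cIdx S _ ≤ t := Nat.sInf_le htmem
      rcases Nat.lt_or_ge (cIdx S (a + (t : Fin (N+3)))) t with h | h
      · exfalso
        have hmem := Nat.sInf_mem (cutIdxSet_nonempty hS (a + (t : Fin (N+3))))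
        set k := cIdx S (a + (t : Fin (N+3)))
        have : a + (t:Fin (N+3)) - 1 - (k : Fin (N+3)) ∈ S := hmem
        have hcast : a + (t:Fin (N+3)) - 1 - (k : Fin (N+3))
            = a + ((t - 1 - k : ℕ) : Fin (N+3)) := by
          have heq : t - 1 - k = t - (k + 1) := by omega
          rw [heq, Nat.cast_sub (by omega)]
          push_cast
          ring
        rw [hcast] at this
        exact hmid _ (by omega) this
      · omega
    simp only [cpt, hidx]
    ring

lemma reach_closed {V : Type*} {G : SimpleGraph V} {s : Set V} (p : V → Prop)
    (hp : ∀ u v : V, u ∈ s → v ∈ s → G.Adj u v → p u → p v) {x y : s}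
    (h : (G.induce s).Reachable x y) (hx : p x) : p y := by
  have key : ∀ (x y : s) (_ : (G.induce s).Walk x y), p x → p y := by
    intro x y w
    induction w with
    | nil => exact id
    | cons hadj w ih =>
      intro hx
      exact ih (hp _ _ (Subtype.mem _) (Subtype.mem _) (comap_adj.mp hadj) hx)
  obtain ⟨w⟩ := h
  exact key x y w hx

lemma exists_left_end {B : Finset (Fin (N+3))} (hne : B.Nonempty) (hnu : B ≠ univ) :
    ∃ a ∈ B, a - 1 ∉ B := by
  by_contra h
  push_neg at h
  obtain ⟨b, hb⟩ := hne
  have key : ∀ k : ℕ, b - (k : Fin (N+3)) ∈ B := by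
    intro k
    induction k with
    | zero => simpa using hb
    | succ k ih =>
      have h2 := h _ ih
      have : b - ((k:ℕ) : Fin (N+3)) - 1 = b - (((k+1 : ℕ)) : Fin (N+3)) := by
        push_cast; ring
      rwa [this] at h2
  apply hnu
  apply Finset.eq_univ_of_forall
  intro v
  have := key ((b - v).val)
  rwa [Fin.cast_val_eq_self, sub_sub_cancel] at this

lemma block_is_arc {B : Finset (Fin (N+3))} (hne : B.Nonempty) (hnu : B ≠ univ)
    (hconn : ((cycleGraph (N+3)).induce (B : Set (Fin (N+3)))).Connected) :
    ∃ a : Fin (N+3), ∃ l : ℕ, l + 1 = B.card ∧ l + 1 < N + 3 ∧ B = arcSet a l ∧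
      a - 1 ∉ B ∧ a + (l : Fin (N+3)) + 1 ∉ B := by
  obtain ⟨a, haB, ha1⟩ := exists_left_end hne hnu
  set p : Fin (N+3) → Prop := fun u => ∀ k : ℕ, k ≤ (u - a).val → a + (k : Fin (N+3)) ∈ B
    with hp_def
  have hp : ∀ u v : Fin (N+3), u ∈ (B : Set (Fin (N+3))) → v ∈ (B : Set (Fin (N+3))) →
      (cycleGraph (N+3)).Adj u v → p u → p v := by
    intro u v hu hv hadj hpu
    rw [cycleGraph_adj] at hadj
    rcases hadj with h1 | h1
    · -- u - v = 1, so v = u - 1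
      have hv_eq : v = u - 1 := by linear_combination -h1
      have hua : u ≠ a := by
        rintro rfl
        exact ha1 (by rwa [← hv_eq])
      have hsub : u - a ≠ 0 := sub_ne_zero_of_ne hua
      have hval : (v - a).val = (u - a).val - 1 := by
        have : v - a = (u - a) - 1 := by rw [hv_eq]; ring
        rw [this, Fin.coe_sub_one, if_neg hsub]
      intro k hk
      exact hpu k (by omega)
    · -- v - u = 1, so v = u + 1
      have hv_eq : v = u + 1 := by linear_combination h1
      have hua : u ≠ a - 1 := by
        rintro rfl
        exact ha1 hu
      have hlast : u - a ≠ Fin.last (N+2) := by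
        intro hcon
        apply hua
        have : u - a = -1 := by
          rw [hcon, Fin.ext_iff, Fin.coe_neg_one]
          rfl
        linear_combination this
      have hval : (v - a).val = (u - a).val + 1 := by
        have h2 : v - a = (u - a) + 1 := by rw [hv_eq]; ring
        rw [h2, Fin.val_add_one, if_neg hlast]
      intro k hk
      rw [hval] at hk
      rcases Nat.lt_or_ge k ((u - a).val + 1) with h2 | h2
      · exact hpu k (by omega)
      · have hk_eq : k = (u - a).val + 1 := by omega
        have : a + (k : Fin (N+3)) = v := by
          rw [hk_eq, hv_eq]
          push_cast [Fin.cast_val_eq_self]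
          ring
        rwa [this]
  have hpa : p a := by
    intro k hk
    simp only [sub_self, Fin.val_zero, Nat.le_zero] at hk
    subst hk
    simpa using haB
  have hpall : ∀ w ∈ B, p w := by
    intro w hw
    exact reach_closed p hp (hconn.preconnected ⟨a, haB⟩ ⟨w, hw⟩) hpa
  have hcard_lt : B.card < N + 3 := by
    have := Finset.card_lt_card (Finset.ssubset_univ_iff.mpr hnu)
    simpa using this
  have hcard_pos : 1 ≤ B.card := Finset.card_pos.mpr hne
  have hsub : ∀ w ∈ B, (w - a).val + 1 ≤ B.card := by
    intro w hw
    have harc : arcSet a ((w - a).val) ⊆ B := by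
      intro z hz
      obtain ⟨k, hk, rfl⟩ := mem_arcSet.1 hz
      exact hpall w hw k hk
    have := Finset.card_le_card harc
    rwa [arcSet_card (Fin.is_lt _)] at this
  refine ⟨a, B.card - 1, by omega, by omega, ?_, ha1, ?_⟩
  · -- B = arcSet a (B.card - 1)
    apply Finset.eq_of_subset_of_card_le
    · intro w hw
      refine mem_arcSet.2 ⟨(w - a).val, by have := hsub w hw; omega, ?_⟩
      rw [Fin.cast_val_eq_self]
      ring
    · rw [arcSet_card (by omega)]
      omega
  · -- a + (B.card - 1) + 1 ∉ B
    intro hcon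
    have hmem' : a + ((B.card : ℕ) : Fin (N+3)) ∈ B := by
      have heq : a + ((B.card : ℕ) : Fin (N+3))
          = a + ((B.card - 1 : ℕ) : Fin (N+3)) + 1 := by
        rw [show B.card = (B.card - 1) + 1 by omega]
        push_cast
        ring
      rw [heq]
      exact hcon
    have hval : ((a + ((B.card : ℕ) : Fin (N+3))) - a).val = B.card := by
      have h2 : (a + ((B.card : ℕ) : Fin (N+3))) - a = ((B.card : ℕ) : Fin (N+3)) := by ring
      rw [h2, Fin.val_natCast, Nat.mod_eq_of_lt hcard_lt]
    have := hsub _ hmem'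
    omega

open scoped Classical in
noncomputable def blockOf (S : Finset (Fin (N+3))) (i : Fin (N+3)) : Finset (Fin (N+3)) :=
  univ.filter (fun v => cpt S v = i)

open scoped Classical in
noncomputable def part (S : Finset (Fin (N+3))) : Finset (Finset (Fin (N+3))) :=
  S.image (blockOf S)

noncomputable def nxt (S : Finset (Fin (N+3))) (i : Fin (N+3)) : ℕ :=
  sInf {k : ℕ | i + 1 + (k : Fin (N+3)) ∈ S}

lemma mem_blockOf {S : Finset (Fin (N+3))} {i v : Fin (N+3)} :
    v ∈ blockOf S i ↔ cpt S v = i := by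
  simp [blockOf]

lemma mem_part {S : Finset (Fin (N+3))} {B : Finset (Fin (N+3))} :
    B ∈ part S ↔ ∃ i ∈ S, blockOf S i = B := by
  simp [part]

lemma nxt_set_nonempty {S : Finset (Fin (N+3))} {i : Fin (N+3)} (hi : i ∈ S) :
    {k : ℕ | i + 1 + (k : Fin (N+3)) ∈ S}.Nonempty := by
  refine ⟨N + 2, ?_⟩
  simp only [Set.mem_setOf_eq]
  have : i + 1 + ((N + 2 : ℕ) : Fin (N+3)) = i := by
    have h1 : ((N + 2 : ℕ) : Fin (N+3)) = -1 := by
      rw [Fin.ext_iff, Fin.coe_neg_one, Fin.val_natCast, Nat.mod_eq_of_lt (by omega)]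
    rw [h1]; ring
  rwa [this]

lemma nxt_lt {S : Finset (Fin (N+3))} {i : Fin (N+3)} (hi : i ∈ S) :
    nxt S i < N + 3 := by
  have hw : (N + 2 : ℕ) ∈ {k : ℕ | i + 1 + (k : Fin (N+3)) ∈ S} := by
    simp only [Set.mem_setOf_eq]
    have h1 : ((N + 2 : ℕ) : Fin (N+3)) = -1 := by
      rw [Fin.ext_iff, Fin.coe_neg_one, Fin.val_natCast, Nat.mod_eq_of_lt (by omega)]
    rw [h1]
    simpa using hi
  have h3 : nxt S i ≤ N + 2 := Nat.sInf_le hw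
  omega

lemma nxt_mem {S : Finset (Fin (N+3))} {i : Fin (N+3)} (hi : i ∈ S) :
    i + 1 + ((nxt S i : ℕ) : Fin (N+3)) ∈ S :=
  Nat.sInf_mem (nxt_set_nonempty hi)

lemma nxt_min {S : Finset (Fin (N+3))} {i : Fin (N+3)} {s : ℕ} (hs : s < nxt S i) :
    i + 1 + (s : Fin (N+3)) ∉ S :=
  Nat.notMem_of_lt_sInf hs

lemma blockOf_eq_arc {S : Finset (Fin (N+3))} (hS : S.Nonempty) {i : Fin (N+3)} (hi : i ∈ S) :
    blockOf S i = arcSet (i + 1) (nxt S i) := by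
  ext w
  rw [mem_blockOf, ← cpt_eq_iff hS (i+1) (nxt S i) (nxt_lt hi)
    (by simpa using hi) (fun s hs => nxt_min hs) (nxt_mem hi) w]
  have : i + 1 - 1 = i := by ring
  rw [this]

lemma succ_mem_blockOf {S : Finset (Fin (N+3))} {i : Fin (N+3)} (hi : i ∈ S) :
    i + 1 ∈ blockOf S i := mem_blockOf.2 (cpt_succ hi)

lemma part_isConnPartition {S : Finset (Fin (N+3))} (hS : S.Nonempty) :
    IsConnPartition (cycleGraph (N+3)) (part S) := by
  refine ⟨⟨?_, ?_⟩, ?_⟩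
  · intro hcon
    obtain ⟨i, hi, hB⟩ := mem_part.1 hcon
    have := succ_mem_blockOf hi
    rw [hB] at this
    exact absurd this (Finset.notMem_empty _)
  · intro v
    refine ⟨blockOf S (cpt S v), ⟨mem_part.2 ⟨cpt S v, cpt_mem hS v, rfl⟩,
      mem_blockOf.2 rfl⟩, ?_⟩
    rintro B ⟨hB, hvB⟩
    obtain ⟨j, hj, rfl⟩ := mem_part.1 hB
    rw [mem_blockOf.1 hvB]
  · intro B hB
    obtain ⟨i, hi, rfl⟩ := mem_part.1 hB
    rw [blockOf_eq_arc hS hi]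
    exact arcSet_connected _ _

lemma card_part {S : Finset (Fin (N+3))} : (part S).card = S.card := by
  rw [part, card_image_of_injOn]
  intro i hi j hj hij
  have h1 := succ_mem_blockOf hi
  rw [hij] at h1
  have := mem_blockOf.1 h1
  rw [cpt_succ hi] at this
  exact this

open scoped Classical in
noncomputable def cutset (P : Finset (Finset (Fin (N+3)))) : Finset (Fin (N+3)) :=
  univ.filter (fun i => ∀ B ∈ P, i ∈ B → i + 1 ∉ B)

lemma mem_cutset {P : Finset (Finset (Fin (N+3)))} {i : Fin (N+3)} :
    i ∈ cutset P ↔ ∀ B ∈ P, i ∈ B → i + 1 ∉ B := by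
  simp [cutset]

lemma cpt_ne_self {S : Finset (Fin (N+3))} (h2 : 2 ≤ S.card) {i : Fin (N+3)} :
    cpt S i ≠ i := by
  have hS : S.Nonempty := Finset.card_pos.1 (by omega)
  intro hcon
  -- then cIdx S i = N + 2
  have hidx : (cIdx S i : Fin (N+3)) = -1 := by
    have : i - 1 - (cIdx S i : Fin (N+3)) = i := hcon
    linear_combination -this
  have hval : cIdx S i = N + 2 := by
    have h3 := cIdx_lt hS i
    have := congrArg Fin.val hidx
    rwa [Fin.val_natCast, Fin.coe_neg_one, Nat.mod_eq_of_lt h3] at this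
  -- get j ∈ S with j ≠ i
  obtain ⟨j, hj, hji⟩ : ∃ j ∈ S, j ≠ i := by
    obtain ⟨u, hu, v, hv, huv⟩ := Finset.one_lt_card.1 (show 1 < S.card by omega)
    rcases eq_or_ne u i with rfl | hne
    · exact ⟨v, hv, fun h => huv h.symm⟩
    · exact ⟨u, hu, hne⟩
  have hk : i - 1 - ((i - 1 - j).val : Fin (N+3)) ∈ S := by
    rw [Fin.cast_val_eq_self, sub_sub_cancel]
    exact hj
  have hle := cIdx_le hk
  have hklt : (i - 1 - j).val < N + 2 := by
    rcases Nat.lt_or_ge (i - 1 - j).val (N+2) with h | h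
    · exact h
    · exfalso
      have hvv : (i - 1 - j).val = N + 2 := by
        have := Fin.is_lt (i - 1 - j); omega
      have : i - 1 - j = -1 := by
        rw [Fin.ext_iff, Fin.coe_neg_one, hvv]
      apply hji
      linear_combination -this
  omega

lemma cpt_add_one_of_not_mem {S : Finset (Fin (N+3))} (hS : S.Nonempty) {i : Fin (N+3)}
    (hi : i ∉ S) : cpt S (i + 1) = cpt S i := by
  set d := cIdx S i with hd
  have hd1 : cIdx S (i + 1) = d + 1 := by
    have hmem : (d + 1 : ℕ) ∈ cutIdxSet S (i + 1) := by
      simp only [cutIdxSet, Set.mem_setOf_eq]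
      have : i + 1 - 1 - ((d + 1 : ℕ) : Fin (N+3)) = i - 1 - (d : Fin (N+3)) := by
        push_cast; ring
      rw [this]
      exact cpt_mem hS i
    have hle : cIdx S (i + 1) ≤ d + 1 := Nat.sInf_le hmem
    have hpos : cIdx S (i + 1) ≠ 0 := by
      intro hcon
      have h0 : cIdx S (i+1) ∈ cutIdxSet S (i+1) :=
        Nat.sInf_mem (cutIdxSet_nonempty hS (i + 1))
      rw [hcon] at h0
      simp only [cutIdxSet, Set.mem_setOf_eq, Nat.cast_zero, sub_zero, add_sub_cancel_right] at h0
      exact hi h0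
    rcases Nat.lt_or_ge (cIdx S (i+1)) (d + 1) with h | h
    · exfalso
      obtain ⟨e, he⟩ : ∃ e, cIdx S (i+1) = e + 1 := ⟨cIdx S (i+1) - 1, by omega⟩
      have h0 : cIdx S (i+1) ∈ cutIdxSet S (i+1) :=
        Nat.sInf_mem (cutIdxSet_nonempty hS (i + 1))
      rw [he] at h0
      simp only [cutIdxSet, Set.mem_setOf_eq] at h0
      have heq : i + 1 - 1 - ((e + 1 : ℕ) : Fin (N+3)) = i - 1 - (e : Fin (N+3)) := by
        push_cast; ring
      rw [heq] at h0
      exact cIdx_min (by omega) h0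
    · omega
  simp only [cpt, hd1, ← hd]
  push_cast
  ring

lemma cutset_part {S : Finset (Fin (N+3))} (h2 : 2 ≤ S.card) : cutset (part S) = S := by
  have hS : S.Nonempty := Finset.card_pos.1 (by omega)
  ext i
  rw [mem_cutset]
  constructor
  · intro h
    by_contra hiS
    have hmem : i ∈ blockOf S (cpt S i) := mem_blockOf.2 rfl
    have hmem2 : i + 1 ∈ blockOf S (cpt S i) := by
      rw [mem_blockOf]
      exact cpt_add_one_of_not_mem hS hiS
    exact h _ (mem_part.2 ⟨cpt S i, cpt_mem hS i, rfl⟩) hmem hmem2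
  · intro hiS B hB hiB
    obtain ⟨j, hj, rfl⟩ := mem_part.1 hB
    rw [mem_blockOf] at hiB ⊢
    rw [cpt_succ hiS]
    rw [← hiB]
    exact fun h => cpt_ne_self h2 h.symm

lemma univ_not_mem_part {S : Finset (Fin (N+3))} (h2 : 2 ≤ S.card) :
    (univ : Finset (Fin (N+3))) ∉ part S := by
  intro hcon
  obtain ⟨i, hi, hB⟩ := mem_part.1 hcon
  obtain ⟨j, hj, hji⟩ : ∃ j ∈ S, j ≠ i := by
    obtain ⟨u, hu, v, hv, huv⟩ := Finset.one_lt_card.1 (show 1 < S.card by omega)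
    rcases eq_or_ne u i with rfl | hne
    · exact ⟨v, hv, fun h => huv h.symm⟩
    · exact ⟨u, hu, hne⟩
  have : j + 1 ∈ blockOf S i := by rw [hB]; exact mem_univ _
  rw [mem_blockOf, cpt_succ hj] at this
  exact hji this

lemma block_unique {P : Finset (Finset (Fin (N+3)))} (hP : IsPartition P)
    {B C : Finset (Fin (N+3))} {v : Fin (N+3)} (hB : B ∈ P) (hvB : v ∈ B)
    (hC : C ∈ P) (hvC : v ∈ C) : B = C := by
  obtain ⟨D, _, hD⟩ := hP.2 v
  rw [hD B ⟨hB, hvB⟩, hD C ⟨hC, hvC⟩]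

lemma eq_trivial_of_univ_mem {P : Finset (Finset (Fin (N+3)))} (hP : IsPartition P)
    (hU : (univ : Finset (Fin (N+3))) ∈ P) : P = {univ} := by
  ext B
  rw [Finset.mem_singleton]
  constructor
  · intro hB
    obtain ⟨v, hv⟩ : B.Nonempty := Finset.nonempty_iff_ne_empty.2 (by rintro rfl; exact hP.1 hB)
    exact block_unique hP hB hv hU (mem_univ v)
  · rintro rfl; exact hU

lemma cutset_nonempty {P : Finset (Finset (Fin (N+3)))} (hP : IsPartition P)
    (hU : (univ : Finset (Fin (N+3))) ∉ P) : (cutset P).Nonempty := by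
  by_contra h
  rw [Finset.not_nonempty_iff_eq_empty] at h
  have hall : ∀ i : Fin (N+3), ∃ B ∈ P, i ∈ B ∧ i + 1 ∈ B := by
    intro i
    by_contra hcon
    push_neg at hcon
    have : i ∈ cutset P := mem_cutset.2 (fun B hB hiB => hcon B hB hiB)
    rw [h] at this
    exact absurd this (Finset.notMem_empty _)
  obtain ⟨B₀, ⟨hB₀, h0B⟩, _⟩ := hP.2 0
  have key : ∀ k : ℕ, ((k : ℕ) : Fin (N+3)) ∈ B₀ := by
    intro k
    induction k with
    | zero => simpa using h0B
    | succ k ih =>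
      obtain ⟨B, hB, hkB, hk1B⟩ := hall (k : Fin (N+3))
      have hBB0 : B = B₀ := block_unique hP hB hkB hB₀ ih
      rw [hBB0] at hk1B
      have : ((k + 1 : ℕ) : Fin (N+3)) = (k : Fin (N+3)) + 1 := by push_cast; ring
      rwa [this]
  apply hU
  have : B₀ = univ := by
    apply Finset.eq_univ_of_forall
    intro v
    have := key v.val
    rwa [Fin.cast_val_eq_self] at this
  rwa [this] at hB₀

lemma block_eq_blockOf {P : Finset (Finset (Fin (N+3)))}
    (hP : IsConnPartition (cycleGraph (N+3)) P)
    (hU : (univ : Finset (Fin (N+3))) ∉ P) {B : Finset (Fin (N+3))} (hB : B ∈ P) :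
    ∃ i ∈ cutset P, blockOf (cutset P) i = B := by
  set S := cutset P with hSdef
  have hS : S.Nonempty := cutset_nonempty hP.1 hU
  have hBne : B.Nonempty := Finset.nonempty_iff_ne_empty.2 (by rintro rfl; exact hP.1.1 hB)
  have hBnu : B ≠ univ := by rintro rfl; exact hU hB
  obtain ⟨a, l, hlcard, hllt, hBarc, ha1, hal1⟩ := block_is_arc hBne hBnu (hP.2 B hB)
  have haB : a ∈ B := by
    rw [hBarc]; exact mem_arcSet.2 ⟨0, Nat.zero_le _, by simp⟩
  have halB : a + (l : Fin (N+3)) ∈ B := by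
    rw [hBarc]; exact mem_arcSet.2 ⟨l, le_rfl, rfl⟩
  have h0 : a - 1 ∈ S := by
    rw [hSdef, mem_cutset]
    intro B' hB' haB' hcon
    have : a - 1 + 1 = a := by ring
    rw [this] at hcon
    exact ha1 (block_unique hP.1 hB' hcon hB haB ▸ haB')
  have hend : a + (l : Fin (N+3)) ∈ S := by
    rw [hSdef, mem_cutset]
    intro B' hB' hmem hcon
    rw [block_unique hP.1 hB' hmem hB halB] at hcon
    exact hal1 hcon
  have hmid : ∀ s : ℕ, s < l → a + (s : Fin (N+3)) ∉ S := by
    intro s hs hcon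
    rw [hSdef, mem_cutset] at hcon
    have h1 : a + (s : Fin (N+3)) ∈ B := by
      rw [hBarc]; exact mem_arcSet.2 ⟨s, by omega, rfl⟩
    have h2 : a + (s : Fin (N+3)) + 1 ∈ B := by
      rw [hBarc]
      refine mem_arcSet.2 ⟨s + 1, by omega, ?_⟩
      push_cast; ring
    exact hcon B hB h1 h2
  refine ⟨a - 1, h0, ?_⟩
  ext w
  rw [mem_blockOf, cpt_eq_iff hS a l (by omega) h0 hmid hend w, ← hBarc]

lemma conn_eq_part {P : Finset (Finset (Fin (N+3)))}
    (hP : IsConnPartition (cycleGraph (N+3)) P)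
    (hU : (univ : Finset (Fin (N+3))) ∉ P) : P = part (cutset P) := by
  have hS : (cutset P).Nonempty := cutset_nonempty hP.1 hU
  ext B
  constructor
  · intro hB
    obtain ⟨i, hi, hBi⟩ := block_eq_blockOf hP hU hB
    exact mem_part.2 ⟨i, hi, hBi⟩
  · intro hB
    obtain ⟨i, hi, rfl⟩ := mem_part.1 hB
    obtain ⟨C, ⟨hC, hiC⟩, _⟩ := hP.1.2 (i + 1)
    obtain ⟨j, hj, hCj⟩ := block_eq_blockOf hP hU hC
    have : i + 1 ∈ blockOf (cutset P) j := hCj.symm ▸ hiC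
    rw [mem_blockOf, cpt_succ hi] at this
    rw [← this] at hCj
    rw [hCj]
    exact hC

lemma two_le_card_cutset {P : Finset (Finset (Fin (N+3)))}
    (hP : IsConnPartition (cycleGraph (N+3)) P)
    (hU : (univ : Finset (Fin (N+3))) ∉ P) : 2 ≤ (cutset P).card := by
  have hS : (cutset P).Nonempty := cutset_nonempty hP.1 hU
  rcases Nat.lt_or_ge (cutset P).card 2 with h | h
  · exfalso
    have hcard1 : (cutset P).card = 1 := by
      have := Finset.card_pos.2 hS; omega
    obtain ⟨i, hi⟩ := Finset.card_eq_one.1 hcard1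
    have hPeq := conn_eq_part hP hU
    rw [hi] at hPeq
    apply hU
    rw [hPeq]
    have hiS : i ∈ ({i} : Finset (Fin (N+3))) := Finset.mem_singleton_self i
    refine mem_part.2 ⟨i, hiS, ?_⟩
    apply Finset.eq_univ_of_forall
    intro v
    rw [mem_blockOf]
    have := cpt_mem (Finset.singleton_nonempty i) v
    rwa [Finset.mem_singleton] at this
  · exact h

lemma trivial_isConnPartition :
    IsConnPartition (cycleGraph (N+3)) ({univ} : Finset (Finset (Fin (N+3)))) := by
  refine ⟨⟨?_, ?_⟩, ?_⟩
  · rw [Finset.mem_singleton]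
    intro h
    have : (0 : Fin (N+3)) ∈ (univ : Finset (Fin (N+3))) := mem_univ _
    rw [← h] at this
    exact absurd this (Finset.notMem_empty _)
  · intro v
    refine ⟨univ, ⟨Finset.mem_singleton_self _, mem_univ _⟩, ?_⟩
    rintro B ⟨hB, -⟩
    exact Finset.mem_singleton.1 hB
  · intro B hB
    rw [Finset.mem_singleton] at hB
    subst hB
    rw [Finset.coe_univ]
    rw [(induceUnivIso (cycleGraph (N+3))).connected_iff]
    exact cycleGraph_connected

end CycleProof

/-- For the cycle `C_n` with `n ≥ 3`, `Q(C_n,x) = (1+x)^n - 1 - (n-1)x`. -/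
theorem cycle_partition_polynomial (n : ℕ) (hn : 3 ≤ n) (x : ℤ) :
    Q (SimpleGraph.cycleGraph n) x = (1 + x) ^ n - 1 - ((n : ℤ) - 1) * x := by
  obtain ⟨N, rfl⟩ : ∃ N, n = N + 3 := ⟨n - 3, by omega⟩
  classical
  have mem_cp : ∀ P, P ∈ connParts (SimpleGraph.cycleGraph (N+3)) ↔
      IsConnPartition (SimpleGraph.cycleGraph (N+3)) P := by
    intro P
    simp [connParts]
  set T : Finset (Finset (Fin (N+3))) := {Finset.univ} with hT
  have hTmem : T ∈ connParts (SimpleGraph.cycleGraph (N+3)) :=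
    (mem_cp T).2 CycleProof.trivial_isConnPartition
  have hTcard : T.card = 1 := Finset.card_singleton _
  rw [Q, ← Finset.add_sum_erase _ _ hTmem, hTcard, pow_one]
  have hbij : ∑ P ∈ (connParts (SimpleGraph.cycleGraph (N+3))).erase T, x ^ P.card
      = ∑ S ∈ (Finset.univ : Finset (Fin (N+3))).powerset.filter (fun S => 2 ≤ S.card),
          x ^ S.card := by
    apply Finset.sum_bij (fun P _ => CycleProof.cutset P)
    · intro P hP
      rw [Finset.mem_erase] at hP
      have hP' := (mem_cp P).1 hP.2
      have hU : (Finset.univ : Finset (Fin (N+3))) ∉ P := fun h =>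
        hP.1 ((CycleProof.eq_trivial_of_univ_mem hP'.1 h).trans hT.symm ▸ rfl)
      rw [Finset.mem_filter, Finset.mem_powerset]
      exact ⟨Finset.subset_univ _, CycleProof.two_le_card_cutset hP' hU⟩
    · intro P hP P' hP' h
      rw [Finset.mem_erase] at hP hP'
      have h1 := (mem_cp P).1 hP.2
      have h2 := (mem_cp P').1 hP'.2
      have hU1 : (Finset.univ : Finset (Fin (N+3))) ∉ P := fun hu =>
        hP.1 (CycleProof.eq_trivial_of_univ_mem h1.1 hu)
      have hU2 : (Finset.univ : Finset (Fin (N+3))) ∉ P' := fun hu =>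
        hP'.1 (CycleProof.eq_trivial_of_univ_mem h2.1 hu)
      rw [CycleProof.conn_eq_part h1 hU1, CycleProof.conn_eq_part h2 hU2, h]
    · intro S hS
      rw [Finset.mem_filter, Finset.mem_powerset] at hS
      have h2 := hS.2
      have hSne : S.Nonempty := Finset.card_pos.1 (by omega)
      refine ⟨CycleProof.part S, ?_, CycleProof.cutset_part h2⟩
      rw [Finset.mem_erase]
      constructor
      · intro hcon
        apply CycleProof.univ_not_mem_part h2
        rw [hcon, hT]
        exact Finset.mem_singleton_self _
      · exact (mem_cp _).2 (CycleProof.part_isConnPartition hSne)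
    · intro P hP
      rw [Finset.mem_erase] at hP
      have hP' := (mem_cp P).1 hP.2
      have hU : (Finset.univ : Finset (Fin (N+3))) ∉ P := fun hu =>
        hP.1 (CycleProof.eq_trivial_of_univ_mem hP'.1 hu)
      have hcard : P.card = (CycleProof.cutset P).card := by
        conv_lhs => rw [CycleProof.conn_eq_part hP' hU]
        exact CycleProof.card_part
      rw [hcard]
  rw [hbij]
  have htotal : ∑ S ∈ (Finset.univ : Finset (Fin (N+3))).powerset, x ^ S.card
      = (x + 1) ^ (N + 3) := by
    have h := Finset.prod_add (fun _ : Fin (N+3) => x) (fun _ : Fin (N+3) => 1)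
      Finset.univ
    simp only [Finset.prod_const, Finset.prod_const_one, one_pow, mul_one, Finset.card_univ,
      Fintype.card_fin] at h
    exact h.symm
  have hsplit := Finset.sum_filter_add_sum_filter_not
    ((Finset.univ : Finset (Fin (N+3))).powerset) (fun S => 2 ≤ S.card)
    (fun S => x ^ S.card)
  have hsmall : ∑ S ∈ (Finset.univ : Finset (Fin (N+3))).powerset.filter
      (fun S => ¬ 2 ≤ S.card), x ^ S.card = 1 + (N + 3 : ℤ) * x := by
    have hset : (Finset.univ : Finset (Fin (N+3))).powerset.filter
        (fun S => ¬ 2 ≤ S.card)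
        = insert ∅ (Finset.univ.image (fun a : Fin (N+3) => ({a} : Finset (Fin (N+3))))) := by
      ext S
      simp only [Finset.mem_filter, Finset.mem_powerset, Finset.mem_insert, Finset.mem_image,
        Finset.mem_univ, true_and]
      constructor
      · rintro ⟨-, h⟩
        have : S.card = 0 ∨ S.card = 1 := by omega
        rcases this with h0 | h1
        · exact Or.inl (Finset.card_eq_zero.1 h0)
        · obtain ⟨a, ha⟩ := Finset.card_eq_one.1 h1
          exact Or.inr ⟨a, ha.symm⟩
      · rintro (rfl | ⟨a, rfl⟩)
        · exact ⟨Finset.empty_subset _, by simp⟩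
        · exact ⟨Finset.subset_univ _, by simp⟩
    rw [hset, Finset.sum_insert, Finset.sum_image]
    · simp only [Finset.card_empty, pow_zero, Finset.card_singleton, pow_one,
        Finset.sum_const, Finset.card_univ, Fintype.card_fin, nsmul_eq_mul]
      push_cast
      ring
    · intro a _ b _ hab
      exact Finset.singleton_injective hab
    · intro hcon
      obtain ⟨a, -, ha⟩ := Finset.mem_image.1 hcon
      exact Finset.singleton_ne_empty a ha
  have hgood : ∑ S ∈ (Finset.univ : Finset (Fin (N+3))).powerset.filter
      (fun S => 2 ≤ S.card), x ^ S.card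
      = (x + 1) ^ (N + 3) - 1 - (N + 3 : ℤ) * x := by
    rw [← htotal, ← hsplit, hsmall]
    ring
  rw [hgood]
  push_cast
  ring
end

section
/- Let G = (V,E) be a finite simple graph and v ∈ V with neighborhood N(v). Then Q(G,x) = x·Q(G−v,x) + Σ_{∅ ≠ W ⊆ N(v)} (−1)^{|W|+1} · Q_{W∪{v}}(G,x), where for a vertex subset U ⊆ V the polynomial Q_U(G,x) = Σ x^{|π|} is taken over all connected set partitions π of G that possess a block containing U (this polynomial equals Q(G/U,x), the partition polynomial of the graph obtained from G by merging all vertices of U into a single vertex). -/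
open Finset

variable {V : Type*} [Fintype V] [DecidableEq V]

open scoped Classical

set_option linter.unusedSectionVars false

lemma part_block_unique {P : Finset (Finset V)}
    (hP : ∀ v : V, ∃! B : Finset V, B ∈ P ∧ v ∈ B)
    {B B' : Finset V} (hB : B ∈ P) (hB' : B' ∈ P) {w : V} (hw : w ∈ B) (hw' : w ∈ B') :
    B = B' := by
  obtain ⟨C, -, hC⟩ := hP w
  rw [hC B ⟨hB, hw⟩, hC B' ⟨hB', hw'⟩]

lemma induce_singleton_connected (G : SimpleGraph V) (v : V) :
    (G.induce (({v} : Finset V) : Set V)).Connected := by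
  rw [SimpleGraph.connected_iff]
  refine ⟨fun a b => ?_, ⟨⟨v, by simp⟩⟩⟩
  have : a = b := by
    ext
    have ha := a.2; have hb := b.2
    simp only [Finset.coe_singleton, Set.mem_singleton_iff] at ha hb
    rw [ha, hb]
  rw [this]

noncomputable def induceInduceIso (G : SimpleGraph V) (s : Set V) (t : Set s) :
    ((G.induce s).induce t) ≃g (G.induce (Subtype.val '' t)) where
  toEquiv := Equiv.Set.image Subtype.val t Subtype.val_injective
  map_rel_iff' := by
    rintro ⟨⟨a, ha⟩, hat⟩ ⟨⟨b, hb⟩, hbt⟩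
    simp [Equiv.Set.image, Equiv.Set.imageOfInjOn, SimpleGraph.comap]

lemma block_eq_singleton (G : SimpleGraph V) {B : Finset V} {v : V}
    (hconn : (G.induce (B : Set V)).Connected) (hv : v ∈ B)
    (hN : ∀ w ∈ B, ¬ G.Adj v w) : B = {v} := by
  ext w
  simp only [Finset.mem_singleton]
  constructor
  · intro hw
    by_contra hne
    obtain ⟨p⟩ := hconn.preconnected ⟨v, by simpa using hv⟩ ⟨w, by simpa using hw⟩
    have hnil : ¬ p.Nil := SimpleGraph.Walk.not_nil_of_ne (by
      intro h
      exact hne (congrArg Subtype.val h).symm)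
    obtain ⟨u, hadj, -, -⟩ := SimpleGraph.Walk.not_nil_iff.mp hnil
    exact hN u.1 (by simpa using u.2) hadj
  · rintro rfl; exact hv

variable (v : V)

noncomputable def dn (B : Finset V) : Finset ({w : V | w ≠ v} : Set V) :=
  B.subtype (fun w => w ∈ ({w : V | w ≠ v} : Set V))

noncomputable def up (C : Finset ({w : V | w ≠ v} : Set V)) : Finset V :=
  C.map (Function.Embedding.subtype _)

variable {v}

@[simp] lemma mem_dn {B : Finset V} (x : ({w : V | w ≠ v} : Set V)) :
    x ∈ dn v B ↔ ↑x ∈ B := Finset.mem_subtype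

@[simp] lemma mem_up {C : Finset ({w : V | w ≠ v} : Set V)} (x : V) :
    x ∈ up v C ↔ ∃ y ∈ C, ↑y = x := by simp [up]

lemma up_dn {B : Finset V} (h : v ∉ B) : up v (dn v B) = B :=
  Finset.subtype_map_of_mem (by
    intro x hx
    simp only [Set.mem_setOf_eq]
    rintro rfl; exact h hx)

lemma dn_up {C : Finset ({w : V | w ≠ v} : Set V)} : dn v (up v C) = C := by
  ext y
  simp only [mem_dn, mem_up]
  constructor
  · rintro ⟨z, hz, hzy⟩
    rwa [Subtype.ext hzy.symm]
  · intro hy; exact ⟨y, hy, rfl⟩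

lemma not_mem_up {C : Finset ({w : V | w ≠ v} : Set V)} : v ∉ up v C := by
  simp only [mem_up, not_exists]
  rintro y ⟨hy, h⟩
  exact y.2 h

@[simp] lemma card_up {C : Finset ({w : V | w ≠ v} : Set V)} : (up v C).card = C.card :=
  Finset.card_map _

lemma connected_up_iff (G : SimpleGraph V) (C : Finset ({w : V | w ≠ v} : Set V)) :
    (G.induce ((up v C : Finset V) : Set V)).Connected ↔
      ((G.induce {w : V | w ≠ v}).induce (C : Set ({w : V | w ≠ v} : Set V))).Connected := by
  have hset : Subtype.val '' (C : Set ({w : V | w ≠ v} : Set V))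
      = ((up v C : Finset V) : Set V) := by
    ext x
    simp [up, Set.mem_image]
  rw [← hset]
  exact (induceInduceIso G {w : V | w ≠ v} _).connected_iff.symm

lemma alt_sum (S : Finset V) :
    (∑ W ∈ S.powerset.filter (fun W => W.Nonempty), (-1:ℤ)^(W.card+1))
      = if S.Nonempty then 1 else 0 := by
  have h1 : S.powerset.filter (fun W => W.Nonempty) = S.powerset.erase ∅ := by
    ext W; simp [Finset.nonempty_iff_ne_empty, and_comm]
  rw [h1, Finset.sum_erase_eq_sub (Finset.empty_mem_powerset S)]
  have h2 : (∑ W ∈ S.powerset, (-1:ℤ)^(W.card+1))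
      = -∑ W ∈ S.powerset, (-1:ℤ)^W.card := by
    rw [← Finset.sum_neg_distrib]
    exact Finset.sum_congr rfl fun W _ => by rw [pow_succ]; ring
  rw [h2, Finset.sum_powerset_neg_one_pow_card]
  by_cases h : S = ∅ <;>
    simp [h, Finset.nonempty_iff_ne_empty]

/-- Inclusion–exclusion on the neighborhood of `v`:
`Q(G,x) = x·Q(G-v,x) + Σ_{∅≠W⊆N(v)} (-1)^{|W|+1} Q_{W∪{v}}(G,x)`, where
`Q_U(G,x)` sums `x^{|π|}` over connected set partitions of `G` with a block containing `U`. -/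
theorem neighborhood_inclusion_exclusion (G : SimpleGraph V) [DecidableRel G.Adj]
    (v : V) (x : ℤ) :
    Q G x
      = x * Q (G.induce {w : V | w ≠ v}) x
        + ∑ W ∈ (G.neighborFinset v).powerset.filter (fun W => W.Nonempty),
            (-1 : ℤ) ^ (W.card + 1) *
              ∑ P ∈ (connParts G).filter (fun P => ∃ B ∈ P, insert v W ⊆ B),
                x ^ P.card := by
  classical
  have hmem : ∀ P, P ∈ connParts G ↔ IsConnPartition G P := by
    intro P; simp [connParts]
  have hmem' : ∀ P, P ∈ connParts (G.induce {w : V | w ≠ v})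
      ↔ IsConnPartition (G.induce {w : V | w ≠ v}) P := by
    intro P; simp [connParts]
  set N := G.neighborFinset v with hNdef
  -- Step 1: swap summation and apply inclusion-exclusion per partition
  have hswap :
      (∑ W ∈ N.powerset.filter (fun W => W.Nonempty),
          (-1:ℤ)^(W.card+1) *
            ∑ P ∈ (connParts G).filter (fun P => ∃ B ∈ P, insert v W ⊆ B), x ^ P.card)
      = ∑ P ∈ (connParts G).filter
            (fun P => ∃ B ∈ P, v ∈ B ∧ (B ∩ N).Nonempty), x ^ P.card := by
    rw [Finset.sum_filter (s := (connParts G))]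
    have hrw : ∀ W ∈ N.powerset.filter (fun W => W.Nonempty),
        (-1:ℤ)^(W.card+1) *
            ∑ P ∈ (connParts G).filter (fun P => ∃ B ∈ P, insert v W ⊆ B), x ^ P.card
        = ∑ P ∈ connParts G,
            (if (∃ B ∈ P, insert v W ⊆ B) then (-1:ℤ)^(W.card+1) * x ^ P.card else 0) := by
      intro W _
      rw [Finset.sum_filter, Finset.mul_sum]
      exact Finset.sum_congr rfl fun P _ => by split <;> simp
    rw [Finset.sum_congr rfl hrw, Finset.sum_comm]
    refine Finset.sum_congr rfl fun P hP => ?_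
    have hPc : IsConnPartition G P := (hmem P).mp hP
    obtain ⟨B0, ⟨hB0, hvB0⟩, hB0u⟩ := hPc.1.2 v
    have hcond : ∀ W : Finset V, (∃ B ∈ P, insert v W ⊆ B) ↔ W ⊆ B0 := by
      intro W
      constructor
      · rintro ⟨B, hB, hsub⟩
        have hBB0 : B = B0 := hB0u B ⟨hB, hsub (Finset.mem_insert_self v W)⟩
        exact hBB0 ▸ (Finset.subset_insert v W).trans hsub
      · intro h
        exact ⟨B0, hB0, Finset.insert_subset hvB0 h⟩
    have hcond2 : (∃ B ∈ P, v ∈ B ∧ (B ∩ N).Nonempty) ↔ (B0 ∩ N).Nonempty := by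
      constructor
      · rintro ⟨B, hB, hvB, hne⟩
        rwa [hB0u B ⟨hB, hvB⟩] at hne
      · intro h; exact ⟨B0, hB0, hvB0, h⟩
    calc ∑ W ∈ N.powerset.filter (fun W => W.Nonempty),
            (if (∃ B ∈ P, insert v W ⊆ B) then (-1:ℤ)^(W.card+1) * x ^ P.card else 0)
        = ∑ W ∈ ((B0 ∩ N).powerset.filter (fun W => W.Nonempty)),
            (-1:ℤ)^(W.card+1) * x ^ P.card := by
          rw [← Finset.sum_filter]
          apply Finset.sum_congr _ (fun _ _ => rfl)
          ext W
          simp only [Finset.mem_filter, Finset.mem_powerset, Finset.subset_inter_iff, hcond]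
          tauto
      _ = (∑ W ∈ ((B0 ∩ N).powerset.filter (fun W => W.Nonempty)),
            (-1:ℤ)^(W.card+1)) * x ^ P.card := by rw [Finset.sum_mul]
      _ = (if (B0 ∩ N).Nonempty then (1:ℤ) else 0) * x ^ P.card := by rw [alt_sum]
      _ = if (∃ B ∈ P, v ∈ B ∧ (B ∩ N).Nonempty) then x ^ P.card else 0 := by
          simp only [hcond2]; split <;> ring
  -- Step 2: partitions not counted above are exactly those containing {v}
  have hfil : (connParts G).filter (fun P => ¬ ∃ B ∈ P, v ∈ B ∧ (B ∩ N).Nonempty)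
      = (connParts G).filter (fun P => {v} ∈ P) := by
    ext P
    simp only [Finset.mem_filter, and_congr_right_iff]
    intro hP
    have hPc : IsConnPartition G P := (hmem P).mp hP
    constructor
    · intro hnc
      obtain ⟨B0, ⟨hB0, hvB0⟩, -⟩ := hPc.1.2 v
      have hN : ∀ w ∈ B0, ¬ G.Adj v w := by
        intro w hw hadj
        exact hnc ⟨B0, hB0, hvB0, ⟨w, Finset.mem_inter.mpr
          ⟨hw, (SimpleGraph.mem_neighborFinset G v w).mpr hadj⟩⟩⟩
      have : B0 = {v} := block_eq_singleton G (hPc.2 B0 hB0) hvB0 hN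
      exact this ▸ hB0
    · rintro hvP ⟨B, hB, hvB, w, hw⟩
      have hBv : B = {v} :=
        part_block_unique hPc.1.2 hB hvP hvB (Finset.mem_singleton_self v)
      rw [hBv] at hw
      rw [Finset.mem_inter, Finset.mem_singleton] at hw
      obtain ⟨hwveq, hw2⟩ := hw
      rw [hwveq] at hw2
      exact G.irrefl ((SimpleGraph.mem_neighborFinset G v v).mp hw2)
  -- Step 3: bijection with partitions of the vertex-deleted graph
  have hv_not_in : ∀ {P : Finset (Finset V)}, IsConnPartition G P → {v} ∈ P →
      ∀ B ∈ P.erase {v}, v ∉ B := by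
    intro P hP hvP B hB hvB
    rw [Finset.mem_erase] at hB
    exact hB.1 (part_block_unique hP.1.2 hB.2 hvP hvB (Finset.mem_singleton_self v))
  have hbij : ∑ P ∈ (connParts G).filter (fun P => {v} ∈ P), x ^ P.card
      = x * Q (G.induce {w : V | w ≠ v}) x := by
    have hQ : x * Q (G.induce {w : V | w ≠ v}) x
        = ∑ P' ∈ connParts (G.induce {w : V | w ≠ v}), x ^ (P'.card + 1) := by
      simp only [Q, Finset.mul_sum]
      exact Finset.sum_congr rfl fun P' _ => by rw [pow_succ, mul_comm]
    rw [hQ]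
    refine Finset.sum_nbij' (i := fun P => (P.erase {v}).image (dn v))
      (j := fun P' => insert {v} (P'.image (up v))) ?_ ?_ ?_ ?_ ?_
    · -- hi
      intro P hP
      rw [Finset.mem_filter] at hP
      obtain ⟨hP, hvP⟩ := hP
      have hPc : IsConnPartition G P := (hmem P).mp hP
      rw [hmem']
      refine ⟨⟨?_, ?_⟩, ?_⟩
      · intro h
        obtain ⟨B, hB, hBe⟩ := Finset.mem_image.mp h
        have hvB := hv_not_in hPc hvP B hB
        have hBemp : B = ∅ := by
          rw [← up_dn hvB, hBe]; simp [up]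
        exact hPc.1.1 (hBemp ▸ (Finset.mem_erase.mp hB).2)
      · intro w
        have hwv : (w : V) ≠ v := w.2
        obtain ⟨B, ⟨hB, hwB⟩, hBu⟩ := hPc.1.2 ↑w
        have hBne : B ≠ {v} := by
          rintro rfl
          exact hwv (Finset.mem_singleton.mp hwB)
        refine ⟨dn v B, ⟨Finset.mem_image_of_mem _ (Finset.mem_erase.mpr ⟨hBne, hB⟩),
          (mem_dn _).mpr hwB⟩, ?_⟩
        rintro C ⟨hC, hwC⟩
        obtain ⟨B', hB', rfl⟩ := Finset.mem_image.mp hC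
        have hwB' : ↑w ∈ B' := (mem_dn _).mp hwC
        rw [hBu B' ⟨(Finset.mem_erase.mp hB').2, hwB'⟩]
      · intro C hC
        obtain ⟨B, hB, rfl⟩ := Finset.mem_image.mp hC
        have hvB := hv_not_in hPc hvP B hB
        refine (connected_up_iff G _).mp ?_
        rw [up_dn hvB]
        exact hPc.2 B (Finset.mem_erase.mp hB).2
    · -- hj
      intro P' hP'
      have hP'c : IsConnPartition (G.induce {w : V | w ≠ v}) P' := (hmem' P').mp hP'
      rw [Finset.mem_filter]
      refine ⟨(hmem _).mpr ⟨⟨?_, ?_⟩, ?_⟩, Finset.mem_insert_self _ _⟩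
      · intro h
        rcases Finset.mem_insert.mp h with h | h
        · exact (Finset.singleton_ne_empty v) h.symm
        · obtain ⟨C, hC, hCe⟩ := Finset.mem_image.mp h
          have hCemp : C = ∅ := by
            rw [← dn_up (C := C), hCe]
            ext y; simp [dn]
          exact hP'c.1.1 (hCemp ▸ hC)
      · intro w
        by_cases hwv : w = v
        · subst hwv
          refine ⟨{w}, ⟨Finset.mem_insert_self _ _, Finset.mem_singleton_self _⟩, ?_⟩
          rintro B ⟨hB, hvB⟩
          rcases Finset.mem_insert.mp hB with h | h
          · exact h
          · obtain ⟨C, hC, rfl⟩ := Finset.mem_image.mp h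
            exact absurd hvB not_mem_up
        · have hws : w ∈ ({w : V | w ≠ v} : Set V) := hwv
          obtain ⟨C, ⟨hC, hwC⟩, hCu⟩ := hP'c.1.2 ⟨w, hws⟩
          refine ⟨up v C, ⟨Finset.mem_insert_of_mem (Finset.mem_image_of_mem _ hC),
            (mem_up w).mpr ⟨⟨w, hws⟩, hwC, rfl⟩⟩, ?_⟩
          rintro B ⟨hB, hwB⟩
          rcases Finset.mem_insert.mp hB with rfl | h
          · exact absurd (Finset.mem_singleton.mp hwB) hwv
          · obtain ⟨C', hC', rfl⟩ := Finset.mem_image.mp h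
            obtain ⟨y, hy, hyw⟩ := (mem_up w).mp hwB
            have hyw' : y = ⟨w, hws⟩ := Subtype.ext hyw
            rw [hCu C' ⟨hC', hyw' ▸ hy⟩]
      · intro B hB
        rcases Finset.mem_insert.mp hB with rfl | h
        · exact induce_singleton_connected G v
        · obtain ⟨C, hC, rfl⟩ := Finset.mem_image.mp h
          exact (connected_up_iff G C).mpr (hP'c.2 C hC)
    · -- left inverse
      intro P hP
      rw [Finset.mem_filter] at hP
      obtain ⟨hP, hvP⟩ := hP
      have hPc : IsConnPartition G P := (hmem P).mp hP
      show insert {v} (((P.erase {v}).image (dn v)).image (up v)) = P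
      rw [Finset.image_image]
      have h1 : ∀ B ∈ P.erase {v}, (up v ∘ dn v) B = B :=
        fun B hB => up_dn (hv_not_in hPc hvP B hB)
      rw [Finset.image_congr h1, Finset.image_id', Finset.insert_erase hvP]
    · -- right inverse
      intro P' hP'
      have h0 : {v} ∉ P'.image (up v) := by
        intro h
        obtain ⟨C, hC, hCe⟩ := Finset.mem_image.mp h
        exact not_mem_up (hCe ▸ Finset.mem_singleton_self v)
      show ((insert {v} (P'.image (up v))).erase {v}).image (dn v) = P'
      rw [Finset.erase_insert h0, Finset.image_image]
      have h1 : ∀ C ∈ P', (dn v ∘ up v) C = C := fun C _ => dn_up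
      rw [Finset.image_congr h1, Finset.image_id']
    · -- cardinality
      intro P hP
      rw [Finset.mem_filter] at hP
      obtain ⟨hP, hvP⟩ := hP
      have hPc : IsConnPartition G P := (hmem P).mp hP
      have hinj : Set.InjOn (dn v) ↑(P.erase {v}) := by
        intro B hB B' hB' h
        rw [← up_dn (hv_not_in hPc hvP B hB), h, up_dn (hv_not_in hPc hvP B' hB')]
      rw [Finset.card_image_of_injOn hinj, Finset.card_erase_of_mem hvP]
      congr 1
      have hpos : 0 < P.card := Finset.card_pos.mpr ⟨{v}, hvP⟩
      omega
  -- Final assembly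
  have hsplit := Finset.sum_filter_add_sum_filter_not (connParts G)
      (fun P => ∃ B ∈ P, v ∈ B ∧ (B ∩ N).Nonempty) (fun P => x ^ P.card)
  rw [hswap]
  simp only [Q] at *
  rw [← hsplit, hfil, hbij]
  ring
end

section
/- Let K_{s,t} be the complete bipartite graph with parts of sizes s and t. Then Q(K_{s,t}, x) = Σ_{i=0}^{s} Σ_{j=0}^{s−i} Σ_{k=0}^{t−j} C(s,i)·C(t,k)·S(s−i,j)·S(t−k,j)·j! · x^{i+j+k}, where C(a,b) is the binomial coefficient and S(a,b) is the Stirling number of the second kind. -/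
open Finset

variable {V : Type*} [Fintype V] [DecidableEq V]

open scoped Classical in
/-- The Stirling number of the second kind `S(a,b)`: the number of set partitions of
an `a`-element set into exactly `b` blocks (so `S(0,0) = 1`). -/
noncomputable def stirlingSnd (a b : ℕ) : ℕ :=
  (Finset.univ.filter
    (fun P : Finset (Finset (Fin a)) => IsPartition P ∧ P.card = b)).card

section PartOn

variable {α : Type*} [DecidableEq α]

/-- partition of the finset `U` -/
def IsPartitionOn (U : Finset α) (P : Finset (Finset α)) : Prop :=
  (∀ B ∈ P, B ⊆ U ∧ B.Nonempty) ∧ ∀ v ∈ U, ∃! B : Finset α, B ∈ P ∧ v ∈ B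

lemma isPartition_iff_on [Fintype α] (P : Finset (Finset α)) :
    IsPartition P ↔ IsPartitionOn (univ : Finset α) P := by
  constructor
  · rintro ⟨h0, h1⟩
    refine ⟨fun B hB => ⟨subset_univ _, ?_⟩, fun v _ => h1 v⟩
    rcases eq_or_ne B ∅ with rfl | h
    · exact absurd hB h0
    · exact nonempty_iff_ne_empty.2 h
  · rintro ⟨h0, h1⟩
    refine ⟨fun h => ?_, fun v => h1 v (mem_univ v)⟩
    exact absurd (h0 ∅ h).2 (by simp)

open scoped Classical in
lemma card_partitionsOn [Fintype α] (U : Finset α) (j : ℕ) :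
    #(univ.filter fun P : Finset (Finset α) => IsPartitionOn U P ∧ P.card = j)
      = stirlingSnd U.card j := by
  classical
  set n := U.card with hn
  let e : {x // x ∈ U} ≃ Fin n := U.equivFin
  let mapB : Finset α → Finset (Fin n) := fun B => (U.attach.filter (fun x => ↑x ∈ B)).image e
  let invB : Finset (Fin n) → Finset α := fun B' => B'.image (fun y => ((e.symm y : {x // x ∈ U}) : α))
  have mem_mapB : ∀ (B : Finset α) (y : Fin n), y ∈ mapB B ↔ ↑(e.symm y) ∈ B := by
    intro B y
    simp only [mapB, mem_image, mem_filter, mem_attach, true_and]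
    constructor
    · rintro ⟨x, hx, rfl⟩; simpa using hx
    · intro h; exact ⟨e.symm y, h, e.apply_symm_apply y⟩
  have mem_invB : ∀ (B' : Finset (Fin n)) (a : α), a ∈ invB B' ↔ ∃ h : a ∈ U, e ⟨a, h⟩ ∈ B' := by
    intro B' a
    simp only [invB, mem_image]
    constructor
    · rintro ⟨y, hy, rfl⟩
      exact ⟨(e.symm y).2, by simpa using hy⟩
    · rintro ⟨h, hy⟩
      exact ⟨e ⟨a, h⟩, hy, by simp⟩
  have inv_map : ∀ B : Finset α, B ⊆ U → invB (mapB B) = B := by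
    intro B hBU; ext a
    rw [mem_invB]
    constructor
    · rintro ⟨h, hy⟩; rw [mem_mapB] at hy; simpa using hy
    · intro ha; exact ⟨hBU ha, by rw [mem_mapB]; simpa using ha⟩
  have map_inv : ∀ B' : Finset (Fin n), mapB (invB B') = B' := by
    intro B'; ext y
    rw [mem_mapB, mem_invB]
    constructor
    · rintro ⟨h, hy⟩
      have : (⟨↑(e.symm y), h⟩ : {x // x ∈ U}) = e.symm y := by simp
      rw [this] at hy; simpa using hy
    · intro hy
      exact ⟨(e.symm y).2, by simpa using hy⟩
  have mapB_sub : ∀ B' : Finset (Fin n), invB B' ⊆ U := by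
    intro B' a ha; exact ((mem_invB B' a).1 ha).1
  rw [stirlingSnd]
  refine Finset.card_bij' (fun P _ => P.image mapB) (fun P' _ => P'.image invB) ?hi ?hj ?li ?ri
  case hi =>
    rintro P hP
    simp only [mem_filter, mem_univ, true_and] at hP ⊢
    obtain ⟨⟨hblocks, huniq⟩, hcard⟩ := hP
    constructor
    · rw [isPartition_iff_on]
      constructor
      · rintro B' hB'
        rcases mem_image.1 hB' with ⟨B, hB, rfl⟩
        refine ⟨subset_univ _, ?_⟩
        obtain ⟨a, ha⟩ := (hblocks B hB).2
        exact ⟨e ⟨a, (hblocks B hB).1 ha⟩, by rw [mem_mapB]; simpa using ha⟩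
      · intro y _
        obtain ⟨B, ⟨hB, haB⟩, hu⟩ := huniq ↑(e.symm y) (e.symm y).2
        refine ⟨mapB B, ⟨mem_image_of_mem _ hB, (mem_mapB B y).2 haB⟩, ?_⟩
        rintro B' ⟨hB', hyB'⟩
        rcases mem_image.1 hB' with ⟨B'', hB'', rfl⟩
        rw [mem_mapB] at hyB'
        rw [hu B'' ⟨hB'', hyB'⟩]
    · rw [← hcard]
      apply card_image_of_injOn
      intro B1 h1 B2 h2 hmap
      have := congrArg invB hmap
      rwa [inv_map B1 (hblocks B1 h1).1, inv_map B2 (hblocks B2 h2).1] at this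
  case hj =>
    rintro P' hP'
    simp only [mem_filter, mem_univ, true_and] at hP' ⊢
    obtain ⟨hPart, hcard⟩ := hP'
    rw [isPartition_iff_on] at hPart
    obtain ⟨hblocks, huniq⟩ := hPart
    constructor
    · constructor
      · rintro B hB
        rcases mem_image.1 hB with ⟨B', hB', rfl⟩
        refine ⟨mapB_sub B', ?_⟩
        obtain ⟨y, hy⟩ := (hblocks B' hB').2
        exact ⟨↑(e.symm y), (mem_invB B' _).2 ⟨(e.symm y).2, by simpa using hy⟩⟩
      · intro a ha
        obtain ⟨B', ⟨hB', hyB'⟩, hu⟩ := huniq (e ⟨a, ha⟩) (mem_univ _)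
        refine ⟨invB B', ⟨mem_image_of_mem _ hB', (mem_invB B' a).2 ⟨ha, hyB'⟩⟩, ?_⟩
        rintro B ⟨hB, haB⟩
        rcases mem_image.1 hB with ⟨B'', hB'', rfl⟩
        rcases (mem_invB B'' a).1 haB with ⟨h, hmem⟩
        rw [hu B'' ⟨hB'', hmem⟩]
    · rw [← hcard]
      apply card_image_of_injOn
      intro B1 h1 B2 h2 hmap
      have := congrArg mapB hmap
      rwa [map_inv B1, map_inv B2] at this
  case li =>
    rintro P hP
    simp only [mem_filter, mem_univ, true_and] at hP
    show Finset.image invB (Finset.image mapB P) = P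
    rw [image_image]
    conv_rhs => rw [← Finset.image_id (s := P)]
    apply Finset.image_congr
    intro B hB
    exact inv_map B ((hP.1.1 B hB).1)
  case ri =>
    rintro P' _
    show Finset.image mapB (Finset.image invB P') = P'
    rw [image_image]
    conv_rhs => rw [← Finset.image_id (s := P')]
    apply Finset.image_congr
    intro B' _
    exact map_inv B'

end PartOn

section Graph
variable {s t : ℕ}

abbrev Vst (s t : ℕ) := Sum (Fin s) (Fin t)

def leftTrace (B : Finset (Vst s t)) : Finset (Fin s) := univ.filter (fun a => Sum.inl a ∈ B)
def rightTrace (B : Finset (Vst s t)) : Finset (Fin t) := univ.filter (fun b => Sum.inr b ∈ B)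

@[simp] lemma mem_leftTrace {B : Finset (Vst s t)} {a : Fin s} :
    a ∈ leftTrace B ↔ Sum.inl a ∈ B := by simp [leftTrace]
@[simp] lemma mem_rightTrace {B : Finset (Vst s t)} {b : Fin t} :
    b ∈ rightTrace B ↔ Sum.inr b ∈ B := by simp [rightTrace]

lemma block_decomp (B : Finset (Vst s t)) :
    B = (leftTrace B).image Sum.inl ∪ (rightTrace B).image Sum.inr := by
  ext v
  rcases v with a | b <;> simp

/-- connectivity of an induced block of the complete bipartite graph -/
lemma conn_of_two_sided {B : Finset (Vst s t)}
    (hl : ∃ a, Sum.inl a ∈ B) (hr : ∃ b, Sum.inr b ∈ B) :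
    ((completeBipartiteGraph (Fin s) (Fin t)).induce (B : Set (Vst s t))).Connected := by
  obtain ⟨a0, ha0⟩ := hl
  obtain ⟨b0, hb0⟩ := hr
  rw [SimpleGraph.connected_iff]
  refine ⟨?_, ⟨⟨Sum.inl a0, by simpa using ha0⟩⟩⟩
  have key : ∀ u : (B : Set (Vst s t)),
      ((completeBipartiteGraph (Fin s) (Fin t)).induce (B : Set (Vst s t))).Reachable
        u ⟨Sum.inr b0, by simpa using hb0⟩ := by
    rintro ⟨u, hu⟩
    rcases u with a | b
    · exact SimpleGraph.Adj.reachable (Or.inl ⟨rfl, rfl⟩)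
    · refine SimpleGraph.Reachable.trans (SimpleGraph.Adj.reachable
        (v := (⟨Sum.inl a0, by simpa using ha0⟩ : (B : Set (Vst s t)))) (Or.inr ⟨rfl, rfl⟩)) ?_
      exact SimpleGraph.Adj.reachable (Or.inl ⟨rfl, rfl⟩)
  intro u v
  exact (key u).trans (key v).symm

lemma singleton_conn (v : Vst s t) :
    ((completeBipartiteGraph (Fin s) (Fin t)).induce (({v} : Finset (Vst s t)) : Set (Vst s t))).Connected := by
  rw [SimpleGraph.connected_iff]
  refine ⟨?_, ⟨⟨v, by simp⟩⟩⟩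
  rintro ⟨u, hu⟩ ⟨w, hw⟩
  simp only [Finset.coe_singleton, Set.mem_singleton_iff] at hu hw
  subst hu; subst hw
  exact SimpleGraph.Reachable.refl _

lemma one_sided_left {B : Finset (Vst s t)} (hB : B.Nonempty)
    (hconn : ((completeBipartiteGraph (Fin s) (Fin t)).induce (B : Set (Vst s t))).Connected)
    (hr : ¬ ∃ b, Sum.inr b ∈ B) : ∃ a, B = {Sum.inl a} := by
  have hbot : (completeBipartiteGraph (Fin s) (Fin t)).induce (B : Set (Vst s t)) = ⊥ := by
    ext u v
    simp only [SimpleGraph.comap_adj, SimpleGraph.bot_adj, iff_false, Function.Embedding.coe_subtype]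
    rcases u with ⟨a | b, hu⟩
    · rcases v with ⟨a' | b', hv⟩
      · simp
      · exact fun _ => hr ⟨b', by simpa using hv⟩
    · exact fun _ => hr ⟨b, by simpa using hu⟩
  obtain ⟨v, hv⟩ := hB
  rcases v with a | b
  · refine ⟨a, ?_⟩
    ext w
    simp only [mem_singleton]
    constructor
    · intro hw
      have := hconn.preconnected ⟨w, by simpa using hw⟩ ⟨Sum.inl a, by simpa using hv⟩
      rw [hbot, SimpleGraph.reachable_bot] at this
      exact congrArg Subtype.val this
    · rintro rfl; exact hv
  · exact absurd ⟨b, hv⟩ hr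

lemma one_sided_right {B : Finset (Vst s t)} (hB : B.Nonempty)
    (hconn : ((completeBipartiteGraph (Fin s) (Fin t)).induce (B : Set (Vst s t))).Connected)
    (hl : ¬ ∃ a, Sum.inl a ∈ B) : ∃ b, B = {Sum.inr b} := by
  have hbot : (completeBipartiteGraph (Fin s) (Fin t)).induce (B : Set (Vst s t)) = ⊥ := by
    ext u v
    simp only [SimpleGraph.comap_adj, SimpleGraph.bot_adj, iff_false, Function.Embedding.coe_subtype]
    rcases u with ⟨a | b, hu⟩
    · exact fun _ => hl ⟨a, by simpa using hu⟩
    · rcases v with ⟨a' | b', hv⟩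
      · exact fun _ => hl ⟨a', by simpa using hv⟩
      · simp
  obtain ⟨v, hv⟩ := hB
  rcases v with a | b
  · exact absurd ⟨a, hv⟩ hl
  · refine ⟨b, ?_⟩
    ext w
    simp only [mem_singleton]
    constructor
    · intro hw
      have := hconn.preconnected ⟨w, by simpa using hw⟩ ⟨Sum.inr b, by simpa using hv⟩
      rw [hbot, SimpleGraph.reachable_bot] at this
      exact congrArg Subtype.val this
    · rintro rfl; exact hv

end Graph

-- ====== part 3 ======

lemma partOn_card_le {α : Type*} [DecidableEq α] {U : Finset α} {P : Finset (Finset α)}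
    (h : IsPartitionOn U P) : P.card ≤ U.card := by
  obtain ⟨hblocks, hcover⟩ := h
  have hU : U = P.biUnion id := by
    ext v
    simp only [mem_biUnion, id]
    constructor
    · intro hv
      obtain ⟨B, ⟨hB, hvB⟩, -⟩ := hcover v hv
      exact ⟨B, hB, hvB⟩
    · rintro ⟨B, hB, hvB⟩
      exact (hblocks B hB).1 hvB
  have hdisj : ∀ B ∈ P, ∀ B' ∈ P, B ≠ B' → Disjoint (id B) (id B') := by
    intro B hB B' hB' hne
    rw [Finset.disjoint_left]
    intro v hvB hvB'
    obtain ⟨Bu, -, hu⟩ := hcover v ((hblocks B hB).1 hvB)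
    exact hne ((hu B ⟨hB, hvB⟩).trans (hu B' ⟨hB', hvB'⟩).symm)
  calc P.card = ∑ B ∈ P, 1 := by simp
    _ ≤ ∑ B ∈ P, (id B).card := by
        apply Finset.sum_le_sum
        intro B hB
        exact Finset.card_pos.2 (hblocks B hB).2
    _ = (P.biUnion id).card := (Finset.card_biUnion hdisj).symm
    _ = U.card := by rw [← hU]

lemma stirling_eq_zero {a b : ℕ} (h : a < b) : stirlingSnd a b = 0 := by
  classical
  rw [stirlingSnd, Finset.card_eq_zero]
  rw [Finset.filter_eq_empty_iff]
  rintro P - ⟨hP, hcard⟩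
  rw [isPartition_iff_on] at hP
  have := partOn_card_le hP
  simp only [hcard, Finset.card_univ, Fintype.card_fin] at this
  omega

section Struct
variable {s t : ℕ}

def leftSing (P : Finset (Finset (Vst s t))) : Finset (Fin s) :=
  univ.filter (fun a => {Sum.inl a} ∈ P)
def rightSing (P : Finset (Finset (Vst s t))) : Finset (Fin t) :=
  univ.filter (fun b => {Sum.inr b} ∈ P)
def mixed (P : Finset (Finset (Vst s t))) : Finset (Finset (Vst s t)) :=
  P.filter (fun B => (∃ a, Sum.inl a ∈ B) ∧ (∃ b, Sum.inr b ∈ B))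

@[simp] lemma mem_leftSing {P : Finset (Finset (Vst s t))} {a : Fin s} :
    a ∈ leftSing P ↔ {Sum.inl a} ∈ P := by simp [leftSing]
@[simp] lemma mem_rightSing {P : Finset (Finset (Vst s t))} {b : Fin t} :
    b ∈ rightSing P ↔ {Sum.inr b} ∈ P := by simp [rightSing]
@[simp] lemma mem_mixed {P : Finset (Finset (Vst s t))} {B : Finset (Vst s t)} :
    B ∈ mixed P ↔ B ∈ P ∧ (∃ a, Sum.inl a ∈ B) ∧ (∃ b, Sum.inr b ∈ B) := by simp [mixed]

variable {P : Finset (Finset (Vst s t))}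

lemma block_eq (hP : IsPartition P) {B B' : Finset (Vst s t)} (hB : B ∈ P) (hB' : B' ∈ P)
    {v : Vst s t} (hv : v ∈ B) (hv' : v ∈ B') : B = B' := by
  obtain ⟨Bu, -, hu⟩ := hP.2 v
  exact (hu B ⟨hB, hv⟩).trans (hu B' ⟨hB', hv'⟩).symm

lemma block_nonempty (hP : IsPartition P) {B : Finset (Vst s t)} (hB : B ∈ P) : B.Nonempty := by
  rcases eq_or_ne B ∅ with rfl | h
  · exact absurd hB hP.1
  · exact nonempty_iff_ne_empty.2 h

lemma trichotomy
    (hP : IsConnPartition (completeBipartiteGraph (Fin s) (Fin t)) P)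
    {B : Finset (Vst s t)} (hB : B ∈ P) :
    (∃ a, B = {Sum.inl a}) ∨ (∃ b, B = {Sum.inr b}) ∨ B ∈ mixed P := by
  by_cases hl : ∃ a, Sum.inl a ∈ B
  · by_cases hr : ∃ b, Sum.inr b ∈ B
    · exact Or.inr (Or.inr (mem_mixed.2 ⟨hB, hl, hr⟩))
    · exact Or.inl (one_sided_left (block_nonempty hP.1 hB) (hP.2 B hB) hr)
  · exact Or.inr (Or.inl (one_sided_right (block_nonempty hP.1 hB) (hP.2 B hB) hl))

lemma leftTrace_injOn (hP : IsPartition P) {B B' : Finset (Vst s t)}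
    (hB : B ∈ mixed P) (hB' : B' ∈ mixed P) (h : leftTrace B = leftTrace B') : B = B' := by
  obtain ⟨hBP, ⟨a, ha⟩, -⟩ := mem_mixed.1 hB
  obtain ⟨hB'P, -, -⟩ := mem_mixed.1 hB'
  have : a ∈ leftTrace B' := h ▸ mem_leftTrace.2 ha
  exact block_eq hP hBP hB'P ha (mem_leftTrace.1 this)

lemma rightTrace_injOn (hP : IsPartition P) {B B' : Finset (Vst s t)}
    (hB : B ∈ mixed P) (hB' : B' ∈ mixed P) (h : rightTrace B = rightTrace B') : B = B' := by
  obtain ⟨hBP, -, ⟨b, hb⟩⟩ := mem_mixed.1 hB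
  obtain ⟨hB'P, -, -⟩ := mem_mixed.1 hB'
  have : b ∈ rightTrace B' := h ▸ mem_rightTrace.2 hb
  exact block_eq hP hBP hB'P hb (mem_rightTrace.1 this)

lemma leftTraces_partition
    (hP : IsConnPartition (completeBipartiteGraph (Fin s) (Fin t)) P) :
    IsPartitionOn (univ \ leftSing P) ((mixed P).image leftTrace) := by
  constructor
  · rintro B₁ hB₁
    rcases mem_image.1 hB₁ with ⟨B, hB, rfl⟩
    obtain ⟨hBP, ⟨a, ha⟩, ⟨b, hb⟩⟩ := mem_mixed.1 hB
    constructor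
    · intro a' ha'
      rw [mem_leftTrace] at ha'
      rw [mem_sdiff]
      refine ⟨mem_univ _, ?_⟩
      rw [mem_leftSing]
      intro hsing
      have := block_eq hP.1 hBP hsing ha' (mem_singleton_self _)
      rw [this] at hb
      simp at hb
    · exact ⟨a, mem_leftTrace.2 ha⟩
  · intro a ha
    rw [mem_sdiff, mem_leftSing] at ha
    obtain ⟨B, ⟨hBP, haB⟩, huB⟩ := hP.1.2 (Sum.inl a)
    have hBmixed : B ∈ mixed P := by
      rcases trichotomy hP hBP with ⟨a', rfl⟩ | ⟨b', rfl⟩ | hm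
      · rw [mem_singleton] at haB
        have ha' := Sum.inl_injective haB
        subst ha'
        exact absurd hBP ha.2
      · simp at haB
      · exact hm
    refine ⟨leftTrace B, ⟨mem_image_of_mem _ hBmixed, mem_leftTrace.2 haB⟩, ?_⟩
    rintro B₁ ⟨hB₁, haB₁⟩
    rcases mem_image.1 hB₁ with ⟨B', hB', rfl⟩
    rw [mem_leftTrace] at haB₁
    rw [huB B' ⟨(mem_mixed.1 hB').1, haB₁⟩]

lemma rightTraces_partition
    (hP : IsConnPartition (completeBipartiteGraph (Fin s) (Fin t)) P) :
    IsPartitionOn (univ \ rightSing P) ((mixed P).image rightTrace) := by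
  constructor
  · rintro B₂ hB₂
    rcases mem_image.1 hB₂ with ⟨B, hB, rfl⟩
    obtain ⟨hBP, ⟨a, ha⟩, ⟨b, hb⟩⟩ := mem_mixed.1 hB
    constructor
    · intro b' hb'
      rw [mem_rightTrace] at hb'
      rw [mem_sdiff]
      refine ⟨mem_univ _, ?_⟩
      rw [mem_rightSing]
      intro hsing
      have := block_eq hP.1 hBP hsing hb' (mem_singleton_self _)
      rw [this] at ha
      simp at ha
    · exact ⟨b, mem_rightTrace.2 hb⟩
  · intro b hb
    rw [mem_sdiff, mem_rightSing] at hb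
    obtain ⟨B, ⟨hBP, hbB⟩, huB⟩ := hP.1.2 (Sum.inr b)
    have hBmixed : B ∈ mixed P := by
      rcases trichotomy hP hBP with ⟨a', rfl⟩ | ⟨b', rfl⟩ | hm
      · simp at hbB
      · rw [mem_singleton] at hbB
        have hb' := Sum.inr_injective hbB
        subst hb'
        exact absurd hBP hb.2
      · exact hm
    refine ⟨rightTrace B, ⟨mem_image_of_mem _ hBmixed, mem_rightTrace.2 hbB⟩, ?_⟩
    rintro B₂ ⟨hB₂, hbB₂⟩
    rcases mem_image.1 hB₂ with ⟨B', hB', rfl⟩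
    rw [mem_rightTrace] at hbB₂
    rw [huB B' ⟨(mem_mixed.1 hB').1, hbB₂⟩]

lemma card_leftTraces (hP : IsPartition P) :
    ((mixed P).image leftTrace).card = (mixed P).card :=
  card_image_of_injOn (fun B hB B' hB' h => leftTrace_injOn hP hB hB' h)

lemma card_rightTraces (hP : IsPartition P) :
    ((mixed P).image rightTrace).card = (mixed P).card :=
  card_image_of_injOn (fun B hB B' hB' h => rightTrace_injOn hP hB hB' h)

lemma P_decomp (hP : IsConnPartition (completeBipartiteGraph (Fin s) (Fin t)) P) :
    P = (leftSing P).image (fun a => ({Sum.inl a} : Finset (Vst s t)))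
        ∪ (rightSing P).image (fun b => ({Sum.inr b} : Finset (Vst s t)))
        ∪ mixed P := by
  ext B
  simp only [mem_union, mem_image, mem_leftSing, mem_rightSing]
  constructor
  · intro hB
    rcases trichotomy hP hB with ⟨a, rfl⟩ | ⟨b, rfl⟩ | hm
    · exact Or.inl (Or.inl ⟨a, hB, rfl⟩)
    · exact Or.inl (Or.inr ⟨b, hB, rfl⟩)
    · exact Or.inr hm
  · rintro ((⟨a, ha, rfl⟩ | ⟨b, hb, rfl⟩) | hm)
    · exact ha
    · exact hb
    · exact (mem_mixed.1 hm).1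

lemma card_P_decomp (hP : IsConnPartition (completeBipartiteGraph (Fin s) (Fin t)) P) :
    P.card = (leftSing P).card + (mixed P).card + (rightSing P).card := by
  have hLcard : ((leftSing P).image (fun a => ({Sum.inl a} : Finset (Vst s t)))).card
      = (leftSing P).card :=
    card_image_of_injective _ (fun a a' h => by simpa using h)
  have hRcard : ((rightSing P).image (fun b => ({Sum.inr b} : Finset (Vst s t)))).card
      = (rightSing P).card :=
    card_image_of_injective _ (fun b b' h => by simpa using h)
  have hdLR : Disjoint ((leftSing P).image (fun a => ({Sum.inl a} : Finset (Vst s t))))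
      ((rightSing P).image (fun b => ({Sum.inr b} : Finset (Vst s t)))) := by
    rw [Finset.disjoint_left]
    rintro B hB hB'
    rcases mem_image.1 hB with ⟨a, -, rfl⟩
    rcases mem_image.1 hB' with ⟨b, -, h⟩
    have : Sum.inr b ∈ ({Sum.inl a} : Finset (Vst s t)) := h ▸ mem_singleton_self _
    simp at this
  have hdLM : Disjoint ((leftSing P).image (fun a => ({Sum.inl a} : Finset (Vst s t))))
      (mixed P) := by
    rw [Finset.disjoint_left]
    rintro B hB hB'
    rcases mem_image.1 hB with ⟨a, -, rfl⟩
    obtain ⟨-, -, b, hb⟩ := mem_mixed.1 hB'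
    simp at hb
  have hdRM : Disjoint ((rightSing P).image (fun b => ({Sum.inr b} : Finset (Vst s t))))
      (mixed P) := by
    rw [Finset.disjoint_left]
    rintro B hB hB'
    rcases mem_image.1 hB with ⟨b, -, rfl⟩
    obtain ⟨-, ⟨a, ha⟩, -⟩ := mem_mixed.1 hB'
    simp at ha
  have key : P.card = ((leftSing P).image (fun a => ({Sum.inl a} : Finset (Vst s t)))
        ∪ (rightSing P).image (fun b => ({Sum.inr b} : Finset (Vst s t)))
        ∪ mixed P).card := by
    conv_lhs => rw [P_decomp hP]
  rw [key, card_union_of_disjoint (by rw [Finset.disjoint_union_left]; exact ⟨hdLM, hdRM⟩),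
    card_union_of_disjoint hdLR, hLcard, hRcard]
  omega

end Struct

-- ====== part 4 : matching count ======

section Matching
variable {s t : ℕ}

lemma leftTrace_union_image (X : Finset (Fin s)) (Y : Finset (Fin t)) :
    leftTrace ((X.image Sum.inl ∪ Y.image Sum.inr : Finset (Vst s t))) = X := by
  ext a; simp

lemma rightTrace_union_image (X : Finset (Fin s)) (Y : Finset (Fin t)) :
    rightTrace ((X.image Sum.inl ∪ Y.image Sum.inr : Finset (Vst s t))) = Y := by
  ext b; simp

variable (A : Finset (Fin s)) (C : Finset (Fin t))
  (P₁ : Finset (Finset (Fin s))) (P₂ : Finset (Finset (Fin t)))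

/-- the block associated to a matched pair -/
def blockFn (e : {B // B ∈ P₁} ≃ {B // B ∈ P₂}) (β₁ : {B // B ∈ P₁}) : Finset (Vst s t) :=
  ((β₁ : Finset (Fin s)).image Sum.inl) ∪ (((e β₁ : Finset (Fin t))).image Sum.inr)

/-- the connected partition associated to a matching -/
def mkPart (e : {B // B ∈ P₁} ≃ {B // B ∈ P₂}) : Finset (Finset (Vst s t)) :=
  A.image (fun a => {Sum.inl a}) ∪ C.image (fun b => {Sum.inr b})
    ∪ P₁.attach.image (blockFn P₁ P₂ e)

variable {A C P₁ P₂}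
variable {e : {B // B ∈ P₁} ≃ {B // B ∈ P₂}}
variable (hP₁ : IsPartitionOn (univ \ A) P₁) (hP₂ : IsPartitionOn (univ \ C) P₂)

lemma mem_mkPart {B : Finset (Vst s t)} :
    B ∈ mkPart A C P₁ P₂ e ↔ (∃ a ∈ A, B = {Sum.inl a}) ∨ (∃ b ∈ C, B = {Sum.inr b})
      ∨ (∃ β₁ : {B // B ∈ P₁}, B = blockFn P₁ P₂ e β₁) := by
  simp only [mkPart, mem_union, mem_image, mem_attach, true_and]
  constructor
  · rintro ((⟨a, ha, rfl⟩ | ⟨b, hb, rfl⟩) | ⟨β₁, rfl⟩)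
    · exact Or.inl ⟨a, ha, rfl⟩
    · exact Or.inr (Or.inl ⟨b, hb, rfl⟩)
    · exact Or.inr (Or.inr ⟨β₁, rfl⟩)
  · rintro (⟨a, ha, rfl⟩ | ⟨b, hb, rfl⟩ | ⟨β₁, rfl⟩)
    · exact Or.inl (Or.inl ⟨a, ha, rfl⟩)
    · exact Or.inl (Or.inr ⟨b, hb, rfl⟩)
    · exact Or.inr ⟨β₁, rfl⟩

lemma mem_blockFn_inl {β₁ : {B // B ∈ P₁}} {a : Fin s} :
    Sum.inl a ∈ blockFn P₁ P₂ e β₁ ↔ a ∈ (β₁ : Finset (Fin s)) := by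
  simp [blockFn]

lemma mem_blockFn_inr {β₁ : {B // B ∈ P₁}} {b : Fin t} :
    Sum.inr b ∈ blockFn P₁ P₂ e β₁ ↔ b ∈ ((e β₁ : Finset (Fin t))) := by
  simp [blockFn]

include hP₁ in
lemma blockFn_not_in_A {β₁ : {B // B ∈ P₁}} {a : Fin s} (h : a ∈ (β₁ : Finset (Fin s))) :
    a ∉ A := by
  have := (hP₁.1 _ β₁.2).1 h
  rw [mem_sdiff] at this
  exact this.2

include hP₂ in
lemma blockFn_not_in_C {β₁ : {B // B ∈ P₁}} {b : Fin t} (h : b ∈ ((e β₁ : Finset (Fin t)))) :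
    b ∉ C := by
  have := (hP₂.1 _ (e β₁).2).1 h
  rw [mem_sdiff] at this
  exact this.2

include hP₁ hP₂ in
lemma mkPart_isPartition : IsPartition (mkPart A C P₁ P₂ e) := by
  constructor
  · intro hmem
    rcases mem_mkPart.1 hmem with ⟨a, -, h⟩ | ⟨b, -, h⟩ | ⟨β₁, h⟩
    · exact absurd h.symm (singleton_ne_empty _)
    · exact absurd h.symm (singleton_ne_empty _)
    · obtain ⟨a, ha⟩ := (hP₁.1 _ β₁.2).2
      have : Sum.inl a ∈ (∅ : Finset (Vst s t)) := h ▸ mem_blockFn_inl.2 ha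
      simp at this
  · intro v
    rcases v with a | b
    · by_cases haA : a ∈ A
      · refine ⟨{Sum.inl a}, ⟨mem_mkPart.2 (Or.inl ⟨a, haA, rfl⟩), mem_singleton_self _⟩, ?_⟩
        rintro B ⟨hB, haB⟩
        rcases mem_mkPart.1 hB with ⟨a', -, rfl⟩ | ⟨b', -, rfl⟩ | ⟨β₁, rfl⟩
        · rw [mem_singleton] at haB
          rw [haB]
        · simp at haB
        · exact absurd haA (blockFn_not_in_A hP₁ (mem_blockFn_inl.1 haB))
      · obtain ⟨β₁v, ⟨hβ₁P, haβ₁⟩, hβuniq⟩ := hP₁.2 a (mem_sdiff.2 ⟨mem_univ _, haA⟩)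
        refine ⟨blockFn P₁ P₂ e ⟨β₁v, hβ₁P⟩,
          ⟨mem_mkPart.2 (Or.inr (Or.inr ⟨⟨β₁v, hβ₁P⟩, rfl⟩)), mem_blockFn_inl.2 haβ₁⟩, ?_⟩
        rintro B ⟨hB, haB⟩
        rcases mem_mkPart.1 hB with ⟨a', ha', rfl⟩ | ⟨b', -, rfl⟩ | ⟨β₁', rfl⟩
        · rw [mem_singleton] at haB
          have := Sum.inl_injective haB
          subst this
          exact absurd ha' haA
        · simp at haB
        · have : (β₁' : Finset (Fin s)) = β₁v :=
            hβuniq _ ⟨β₁'.2, mem_blockFn_inl.1 haB⟩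
          congr 1
          exact Subtype.ext this
    · by_cases hbC : b ∈ C
      · refine ⟨{Sum.inr b}, ⟨mem_mkPart.2 (Or.inr (Or.inl ⟨b, hbC, rfl⟩)), mem_singleton_self _⟩, ?_⟩
        rintro B ⟨hB, hbB⟩
        rcases mem_mkPart.1 hB with ⟨a', -, rfl⟩ | ⟨b', -, rfl⟩ | ⟨β₁, rfl⟩
        · simp at hbB
        · rw [mem_singleton] at hbB
          rw [hbB]
        · exact absurd hbC (blockFn_not_in_C hP₂ (mem_blockFn_inr.1 hbB))
      · obtain ⟨β₂v, ⟨hβ₂P, hbβ₂⟩, hβuniq⟩ := hP₂.2 b (mem_sdiff.2 ⟨mem_univ _, hbC⟩)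
        refine ⟨blockFn P₁ P₂ e (e.symm ⟨β₂v, hβ₂P⟩),
          ⟨mem_mkPart.2 (Or.inr (Or.inr ⟨e.symm ⟨β₂v, hβ₂P⟩, rfl⟩)),
            mem_blockFn_inr.2 (by rw [e.apply_symm_apply]; exact hbβ₂)⟩, ?_⟩
        rintro B ⟨hB, hbB⟩
        rcases mem_mkPart.1 hB with ⟨a', -, rfl⟩ | ⟨b', hb', rfl⟩ | ⟨β₁', rfl⟩
        · simp at hbB
        · rw [mem_singleton] at hbB
          have := Sum.inr_injective hbB
          subst this
          exact absurd hb' hbC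
        · have : ((e β₁' : Finset (Fin t))) = β₂v :=
            hβuniq _ ⟨(e β₁').2, mem_blockFn_inr.1 hbB⟩
          have h2 : e β₁' = ⟨β₂v, hβ₂P⟩ := Subtype.ext this
          congr 1
          rw [← h2, e.symm_apply_apply]

include hP₁ hP₂ in
lemma mkPart_isConn :
    IsConnPartition (completeBipartiteGraph (Fin s) (Fin t)) (mkPart A C P₁ P₂ e) := by
  refine ⟨mkPart_isPartition hP₁ hP₂, ?_⟩
  intro B hB
  rcases mem_mkPart.1 hB with ⟨a, -, rfl⟩ | ⟨b, -, rfl⟩ | ⟨β₁, rfl⟩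
  · exact singleton_conn _
  · exact singleton_conn _
  · obtain ⟨a, ha⟩ := (hP₁.1 _ β₁.2).2
    obtain ⟨b, hb⟩ := (hP₂.1 _ (e β₁).2).2
    exact conn_of_two_sided ⟨a, mem_blockFn_inl.2 ha⟩ ⟨b, mem_blockFn_inr.2 hb⟩

include hP₁ hP₂ in
lemma mkPart_leftSing : leftSing (mkPart A C P₁ P₂ e) = A := by
  ext a
  rw [mem_leftSing]
  constructor
  · intro h
    rcases mem_mkPart.1 h with ⟨a', ha', heq⟩ | ⟨b', -, heq⟩ | ⟨β₁, heq⟩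
    · have : a = a' := Sum.inl_injective (by
        have := mem_singleton_self (Sum.inl a : Vst s t)
        rw [heq] at this
        exact mem_singleton.1 this)
      rwa [this]
    · have := mem_singleton_self (Sum.inl a : Vst s t)
      rw [heq] at this
      simp at this
    · obtain ⟨b, hb⟩ := (hP₂.1 _ (e β₁).2).2
      have : Sum.inr b ∈ ({Sum.inl a} : Finset (Vst s t)) := heq ▸ mem_blockFn_inr.2 hb
      simp at this
  · intro h
    exact mem_mkPart.2 (Or.inl ⟨a, h, rfl⟩)

include hP₁ hP₂ in
lemma mkPart_rightSing : rightSing (mkPart A C P₁ P₂ e) = C := by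
  ext b
  rw [mem_rightSing]
  constructor
  · intro h
    rcases mem_mkPart.1 h with ⟨a', -, heq⟩ | ⟨b', hb', heq⟩ | ⟨β₁, heq⟩
    · have := mem_singleton_self (Sum.inr b : Vst s t)
      rw [heq] at this
      simp at this
    · have : b = b' := Sum.inr_injective (by
        have := mem_singleton_self (Sum.inr b : Vst s t)
        rw [heq] at this
        exact mem_singleton.1 this)
      rwa [this]
    · obtain ⟨a, ha⟩ := (hP₁.1 _ β₁.2).2
      have : Sum.inl a ∈ ({Sum.inr b} : Finset (Vst s t)) := heq ▸ mem_blockFn_inl.2 ha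
      simp at this
  · intro h
    exact mem_mkPart.2 (Or.inr (Or.inl ⟨b, h, rfl⟩))

include hP₁ hP₂ in
lemma mkPart_mixed :
    mixed (mkPart A C P₁ P₂ e) = P₁.attach.image (blockFn P₁ P₂ e) := by
  ext B
  rw [mem_mixed]
  constructor
  · rintro ⟨hB, ⟨a, ha⟩, ⟨b, hb⟩⟩
    rcases mem_mkPart.1 hB with ⟨a', -, rfl⟩ | ⟨b', -, rfl⟩ | ⟨β₁, rfl⟩
    · simp at hb
    · simp at ha
    · exact mem_image.2 ⟨β₁, mem_attach _ _, rfl⟩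
  · intro hB
    rcases mem_image.1 hB with ⟨β₁, -, rfl⟩
    obtain ⟨a, ha⟩ := (hP₁.1 _ β₁.2).2
    obtain ⟨b, hb⟩ := (hP₂.1 _ (e β₁).2).2
    exact ⟨mem_mkPart.2 (Or.inr (Or.inr ⟨β₁, rfl⟩)),
      ⟨a, mem_blockFn_inl.2 ha⟩, ⟨b, mem_blockFn_inr.2 hb⟩⟩

lemma leftTrace_blockFn (β₁ : {B // B ∈ P₁}) :
    leftTrace (blockFn P₁ P₂ e β₁) = (β₁ : Finset (Fin s)) :=
  leftTrace_union_image _ _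

lemma rightTrace_blockFn (β₁ : {B // B ∈ P₁}) :
    rightTrace (blockFn P₁ P₂ e β₁) = ((e β₁ : Finset (Fin t))) :=
  rightTrace_union_image _ _

include hP₁ hP₂ in
lemma mkPart_leftTraces :
    (mixed (mkPart A C P₁ P₂ e)).image leftTrace = P₁ := by
  rw [mkPart_mixed hP₁ hP₂, image_image]
  have : (leftTrace ∘ blockFn P₁ P₂ e) = fun β₁ : {B // B ∈ P₁} => (β₁ : Finset (Fin s)) := by
    funext β₁
    exact leftTrace_blockFn β₁
  rw [this, attach_image_val]

include hP₁ hP₂ in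
lemma mkPart_rightTraces :
    (mixed (mkPart A C P₁ P₂ e)).image rightTrace = P₂ := by
  rw [mkPart_mixed hP₁ hP₂, image_image]
  have h1 : (rightTrace ∘ blockFn P₁ P₂ e) = fun β₁ : {B // B ∈ P₁} => ((e β₁ : Finset (Fin t))) := by
    funext β₁
    exact rightTrace_blockFn β₁
  rw [h1]
  ext B₂
  simp only [mem_image, mem_attach, true_and]
  constructor
  · rintro ⟨β₁, rfl⟩
    exact (e β₁).2
  · intro hB₂
    exact ⟨e.symm ⟨B₂, hB₂⟩, by rw [e.apply_symm_apply]⟩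

lemma blockFn_injective : Function.Injective (blockFn P₁ P₂ e) := by
  intro β₁ β₁' h
  have := congrArg leftTrace h
  rw [leftTrace_blockFn, leftTrace_blockFn] at this
  exact Subtype.ext this

include hP₁ hP₂ in
lemma mkPart_mixed_card : (mixed (mkPart A C P₁ P₂ e)).card = P₁.card := by
  rw [mkPart_mixed hP₁ hP₂,
    card_image_of_injective _ (blockFn_injective), card_attach]

end Matching

-- ====== part 4b : the matching count lemma ======

open scoped Classical in
lemma matching_card {s t : ℕ} {A : Finset (Fin s)} {C : Finset (Fin t)} {j : ℕ}
    {P₁ : Finset (Finset (Fin s))} {P₂ : Finset (Finset (Fin t))}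
    (hP₁ : IsPartitionOn (univ \ A) P₁) (hc₁ : P₁.card = j)
    (hP₂ : IsPartitionOn (univ \ C) P₂) (hc₂ : P₂.card = j) :
    ((connParts (completeBipartiteGraph (Fin s) (Fin t))).filter
      (fun P => leftSing P = A ∧ rightSing P = C ∧ (mixed P).card = j ∧
        (mixed P).image leftTrace = P₁ ∧ (mixed P).image rightTrace = P₂)).card
      = j.factorial := by
  classical
  have hcard12 : Fintype.card {B // B ∈ P₁} = Fintype.card {B // B ∈ P₂} := by
    rw [Fintype.card_coe, Fintype.card_coe, hc₁, hc₂]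
  have key : (univ : Finset ({B // B ∈ P₁} ≃ {B // B ∈ P₂})).card
      = ((connParts (completeBipartiteGraph (Fin s) (Fin t))).filter
      (fun P => leftSing P = A ∧ rightSing P = C ∧ (mixed P).card = j ∧
        (mixed P).image leftTrace = P₁ ∧ (mixed P).image rightTrace = P₂)).card := by
    apply Finset.card_bij (fun e _ => mkPart A C P₁ P₂ e)
    · -- maps to
      intro e _
      rw [mem_filter]
      refine ⟨mem_filter.2 ⟨mem_univ _, mkPart_isConn hP₁ hP₂⟩,
        mkPart_leftSing hP₁ hP₂, mkPart_rightSing hP₁ hP₂, ?_,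
        mkPart_leftTraces hP₁ hP₂, mkPart_rightTraces hP₁ hP₂⟩
      rw [mkPart_mixed_card hP₁ hP₂, hc₁]
    · -- injective
      intro e _ e' _ heq
      apply Equiv.ext
      intro β₁
      have hmem : blockFn P₁ P₂ e β₁ ∈ mkPart A C P₁ P₂ e' := by
        rw [← heq]
        exact mem_mkPart.2 (Or.inr (Or.inr ⟨β₁, rfl⟩))
      rcases mem_mkPart.1 hmem with ⟨a, -, hB⟩ | ⟨b, -, hB⟩ | ⟨β₁', hB⟩
      · obtain ⟨b, hb⟩ := (hP₂.1 _ (e β₁).2).2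
        have : Sum.inr b ∈ ({Sum.inl a} : Finset (Vst s t)) := hB ▸ mem_blockFn_inr.2 hb
        simp at this
      · obtain ⟨a, ha⟩ := (hP₁.1 _ β₁.2).2
        have : Sum.inl a ∈ ({Sum.inr b} : Finset (Vst s t)) := hB ▸ mem_blockFn_inl.2 ha
        simp at this
      · have hL := congrArg leftTrace hB
        rw [leftTrace_blockFn, leftTrace_blockFn] at hL
        have hββ : β₁ = β₁' := Subtype.ext hL
        subst hββ
        have hRt := congrArg rightTrace hB
        rw [rightTrace_blockFn, rightTrace_blockFn] at hRt
        exact Subtype.ext hRt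
    · -- surjective
      rintro P hP
      rw [mem_filter] at hP
      obtain ⟨hPc, hA, hC, hj, hL, hR⟩ := hP
      have hconn : IsConnPartition (completeBipartiteGraph (Fin s) (Fin t)) P :=
        (mem_filter.1 hPc).2
      have hex : ∀ β₁ : {B // B ∈ P₁}, ∃ B, B ∈ mixed P ∧ leftTrace B = ↑β₁ := by
        intro β₁
        have h2 : (β₁ : Finset (Fin s)) ∈ (mixed P).image leftTrace := by
          rw [hL]; exact β₁.2
        rcases mem_image.1 h2 with ⟨B, hB, hBe⟩
        exact ⟨B, hB, hBe⟩
      choose g hg1 hg2 using hex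
      have hψinj : ∀ β₁ β₁' : {B // B ∈ P₁},
          rightTrace (g β₁) = rightTrace (g β₁') → β₁ = β₁' := by
        intro β₁ β₁' h
        have hgg : g β₁ = g β₁' := rightTrace_injOn hconn.1 (hg1 β₁) (hg1 β₁') h
        apply Subtype.ext
        rw [← hg2 β₁, ← hg2 β₁', hgg]
      have hbij : Function.Bijective (fun β₁ : {B // B ∈ P₁} =>
          (⟨rightTrace (g β₁), by rw [← hR]; exact mem_image_of_mem _ (hg1 β₁)⟩ :
            {B // B ∈ P₂})) := by
        rw [Fintype.bijective_iff_injective_and_card]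
        exact ⟨fun β₁ β₁' h => hψinj _ _ (congrArg Subtype.val h), hcard12⟩
      refine ⟨Equiv.ofBijective _ hbij, mem_univ _, ?_⟩
      have hblocks : P₁.attach.image (blockFn P₁ P₂ (Equiv.ofBijective _ hbij)) = mixed P := by
        ext B
        simp only [mem_image, mem_attach, true_and]
        constructor
        · rintro ⟨β₁, rfl⟩
          have hbf : blockFn P₁ P₂ (Equiv.ofBijective _ hbij) β₁ = g β₁ := by
            rw [blockFn]
            have h1 : ((β₁ : Finset (Fin s))) = leftTrace (g β₁) := (hg2 β₁).symm
            have h2 : ((Equiv.ofBijective _ hbij β₁ : Finset (Fin t))) = rightTrace (g β₁) := rfl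
            rw [h1, h2, ← block_decomp]
          rw [hbf]
          exact hg1 β₁
        · intro hB
          have hBL : leftTrace B ∈ P₁ := by
            rw [← hL]
            exact mem_image_of_mem _ hB
          refine ⟨⟨leftTrace B, hBL⟩, ?_⟩
          have hgB : g ⟨leftTrace B, hBL⟩ = B :=
            leftTrace_injOn hconn.1 (hg1 _) hB (hg2 ⟨leftTrace B, hBL⟩)
          rw [blockFn]
          have h1 : ((⟨leftTrace B, hBL⟩ : {B // B ∈ P₁}) : Finset (Fin s))
              = leftTrace (g ⟨leftTrace B, hBL⟩) := (hg2 _).symm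
          have h2 : ((Equiv.ofBijective _ hbij ⟨leftTrace B, hBL⟩ : Finset (Fin t)))
              = rightTrace (g ⟨leftTrace B, hBL⟩) := rfl
          rw [h1, h2, ← block_decomp, hgB]
      rw [mkPart, hblocks, ← hA, ← hC, ← P_decomp hconn]
  rw [← key, card_univ, Fintype.card_equiv (Fintype.equivOfCardEq hcard12),
    Fintype.card_coe, hc₁]

-- ====== part 5 : assembly ======

open scoped Classical in
lemma key2 {s t : ℕ} {A : Finset (Fin s)} {C : Finset (Fin t)} {i j k : ℕ}
    (hAi : A.card = i) (hCk : C.card = k) :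
    ((connParts (completeBipartiteGraph (Fin s) (Fin t))).filter
      (fun P => leftSing P = A ∧ rightSing P = C ∧ (mixed P).card = j)).card
    = stirlingSnd (s - i) j * stirlingSnd (t - k) j * j.factorial := by
  classical
  have hU1 : (univ \ A).card = s - i := by
    rw [card_sdiff_of_subset (subset_univ _), card_univ, Fintype.card_fin, hAi]
  have hU2 : (univ \ C).card = t - k := by
    rw [card_sdiff_of_subset (subset_univ _), card_univ, Fintype.card_fin, hCk]
  set Parts₁ := univ.filter
    (fun Q : Finset (Finset (Fin s)) => IsPartitionOn (univ \ A) Q ∧ Q.card = j) with hp1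
  set Parts₂ := univ.filter
    (fun R : Finset (Finset (Fin t)) => IsPartitionOn (univ \ C) R ∧ R.card = j) with hp2
  have hmaps : ∀ P ∈ (connParts (completeBipartiteGraph (Fin s) (Fin t))).filter
      (fun P => leftSing P = A ∧ rightSing P = C ∧ (mixed P).card = j),
      ((mixed P).image leftTrace, (mixed P).image rightTrace) ∈ Parts₁ ×ˢ Parts₂ := by
    intro P hP
    rw [mem_filter] at hP
    obtain ⟨hPc, hA, hC, hj⟩ := hP
    have hconn : IsConnPartition (completeBipartiteGraph (Fin s) (Fin t)) P :=
      (mem_filter.1 hPc).2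
    rw [mem_product, hp1, hp2, mem_filter, mem_filter]
    refine ⟨⟨mem_univ _, ?_, ?_⟩, ⟨mem_univ _, ?_, ?_⟩⟩
    · rw [← hA]; exact leftTraces_partition hconn
    · rw [card_leftTraces hconn.1, hj]
    · rw [← hC]; exact rightTraces_partition hconn
    · rw [card_rightTraces hconn.1, hj]
  rw [card_eq_sum_card_fiberwise hmaps]
  have hterm : ∀ q ∈ Parts₁ ×ˢ Parts₂,
      (((connParts (completeBipartiteGraph (Fin s) (Fin t))).filter
        (fun P => leftSing P = A ∧ rightSing P = C ∧ (mixed P).card = j)).filter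
        (fun P => ((mixed P).image leftTrace, (mixed P).image rightTrace) = q)).card
      = j.factorial := by
    rintro ⟨P₁, P₂⟩ hq
    rw [mem_product, hp1, hp2, mem_filter, mem_filter] at hq
    obtain ⟨⟨-, h1, hc1⟩, ⟨-, h2, hc2⟩⟩ := hq
    rw [filter_filter]
    have hset : ((connParts (completeBipartiteGraph (Fin s) (Fin t))).filter
        (fun P => (leftSing P = A ∧ rightSing P = C ∧ (mixed P).card = j)
          ∧ ((mixed P).image leftTrace, (mixed P).image rightTrace) = (P₁, P₂)))
        = ((connParts (completeBipartiteGraph (Fin s) (Fin t))).filter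
        (fun P => leftSing P = A ∧ rightSing P = C ∧ (mixed P).card = j ∧
          (mixed P).image leftTrace = P₁ ∧ (mixed P).image rightTrace = P₂)) := by
      apply filter_congr
      intro P _
      simp only [Prod.mk.injEq]
      tauto
    rw [hset]
    exact matching_card h1 hc1 h2 hc2
  rw [Finset.sum_congr rfl hterm, Finset.sum_const, card_product, smul_eq_mul]
  rw [hp1, hp2, card_partitionsOn, card_partitionsOn, hU1, hU2]

open scoped Classical in
lemma key3 {s t : ℕ} (i j k : ℕ) :
    ((connParts (completeBipartiteGraph (Fin s) (Fin t))).filter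
      (fun P => ((leftSing P).card, (mixed P).card, (rightSing P).card) = (i, j, k))).card
    = s.choose i * t.choose k *
        (stirlingSnd (s - i) j * stirlingSnd (t - k) j * j.factorial) := by
  classical
  have hmaps : ∀ P ∈ (connParts (completeBipartiteGraph (Fin s) (Fin t))).filter
      (fun P => ((leftSing P).card, (mixed P).card, (rightSing P).card) = (i, j, k)),
      (leftSing P, rightSing P) ∈ powersetCard i (univ : Finset (Fin s))
        ×ˢ powersetCard k (univ : Finset (Fin t)) := by
    intro P hP
    rw [mem_filter] at hP
    obtain ⟨-, htrip⟩ := hP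
    simp only [Prod.mk.injEq] at htrip
    rw [mem_product, mem_powersetCard, mem_powersetCard]
    exact ⟨⟨subset_univ _, htrip.1⟩, ⟨subset_univ _, htrip.2.2⟩⟩
  rw [card_eq_sum_card_fiberwise hmaps]
  have hterm : ∀ q ∈ powersetCard i (univ : Finset (Fin s))
        ×ˢ powersetCard k (univ : Finset (Fin t)),
      (((connParts (completeBipartiteGraph (Fin s) (Fin t))).filter
        (fun P => ((leftSing P).card, (mixed P).card, (rightSing P).card) = (i, j, k))).filter
        (fun P => (leftSing P, rightSing P) = q)).card
      = stirlingSnd (s - i) j * stirlingSnd (t - k) j * j.factorial := by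
    rintro ⟨A, C⟩ hq
    rw [mem_product, mem_powersetCard, mem_powersetCard] at hq
    obtain ⟨⟨-, hAi⟩, ⟨-, hCk⟩⟩ := hq
    rw [filter_filter]
    have hset : ((connParts (completeBipartiteGraph (Fin s) (Fin t))).filter
        (fun P => (((leftSing P).card, (mixed P).card, (rightSing P).card) = (i, j, k))
          ∧ (leftSing P, rightSing P) = (A, C)))
        = ((connParts (completeBipartiteGraph (Fin s) (Fin t))).filter
        (fun P => leftSing P = A ∧ rightSing P = C ∧ (mixed P).card = j)) := by
      apply filter_congr
      intro P _
      simp only [Prod.mk.injEq]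
      constructor
      · rintro ⟨⟨-, hj, -⟩, hA, hC⟩
        exact ⟨hA, hC, hj⟩
      · rintro ⟨hA, hC, hj⟩
        exact ⟨⟨by rw [hA, hAi], hj, by rw [hC, hCk]⟩, hA, hC⟩
    rw [hset]
    exact key2 hAi hCk
  rw [Finset.sum_congr rfl hterm, Finset.sum_const, card_product, smul_eq_mul]
  rw [card_powersetCard, card_powersetCard, card_univ, card_univ, Fintype.card_fin,
    Fintype.card_fin]


/-- The partition polynomial of the complete bipartite graph `K_{s,t}`. -/
theorem completeBipartite_partition_polynomial (s t : ℕ) (x : ℤ) :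
    Q (completeBipartiteGraph (Fin s) (Fin t)) x
      = ∑ i ∈ Finset.range (s + 1), ∑ j ∈ Finset.range (s - i + 1),
          ∑ k ∈ Finset.range (t - j + 1),
            (s.choose i : ℤ) * (t.choose k : ℤ) * (stirlingSnd (s - i) j : ℤ)
              * (stirlingSnd (t - k) j : ℤ) * (Nat.factorial j : ℤ)
              * x ^ (i + j + k) := by
  classical
  -- abbreviation for a term
  set G := completeBipartiteGraph (Fin s) (Fin t) with hG
  have hmaps : ∀ P ∈ connParts G,
      ((leftSing P).card, (mixed P).card, (rightSing P).card)
        ∈ range (s+1) ×ˢ (range (s+1) ×ˢ range (t+1)) := by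
    intro P hP
    have hconn : IsConnPartition G P := (mem_filter.1 hP).2
    have h1 : (leftSing P).card ≤ s := by
      simpa using card_le_univ (leftSing P)
    have h3 : (rightSing P).card ≤ t := by
      simpa using card_le_univ (rightSing P)
    have h2 : (mixed P).card ≤ s := by
      rw [← card_leftTraces hconn.1]
      refine le_trans (partOn_card_le (leftTraces_partition hconn)) ?_
      simpa using card_le_univ ((univ : Finset (Fin s)) \ leftSing P)
    simp only [mem_product, mem_range]
    refine ⟨by omega, by omega, by omega⟩
  have hQ : Q G x
      = ∑ p ∈ range (s+1) ×ˢ (range (s+1) ×ˢ range (t+1)),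
          ((((connParts G).filter (fun P =>
            ((leftSing P).card, (mixed P).card, (rightSing P).card) = p)).card : ℤ))
            * x ^ (p.1 + p.2.1 + p.2.2) := by
    rw [Q, ← Finset.sum_fiberwise_of_maps_to hmaps (fun P => x ^ P.card)]
    apply Finset.sum_congr rfl
    rintro ⟨i, j, k⟩ -
    have hterm : ∀ P ∈ (connParts G).filter (fun P =>
        ((leftSing P).card, (mixed P).card, (rightSing P).card) = (i, j, k)),
        x ^ P.card = x ^ (i + j + k) := by
      intro P hP
      rw [mem_filter] at hP
      obtain ⟨hPc, htrip⟩ := hP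
      have hconn : IsConnPartition G P := (mem_filter.1 hPc).2
      simp only [Prod.mk.injEq] at htrip
      rw [card_P_decomp hconn, htrip.1, htrip.2.1, htrip.2.2]
    rw [Finset.sum_congr rfl hterm, Finset.sum_const, nsmul_eq_mul]
  rw [hQ]
  -- rewrite fibers via key3
  have hfib : ∀ p ∈ range (s+1) ×ˢ (range (s+1) ×ˢ range (t+1)),
      ((((connParts G).filter (fun P =>
        ((leftSing P).card, (mixed P).card, (rightSing P).card) = p)).card : ℤ))
        * x ^ (p.1 + p.2.1 + p.2.2)
      = ((s.choose p.1 : ℤ) * (t.choose p.2.2 : ℤ) * (stirlingSnd (s - p.1) p.2.1 : ℤ)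
          * (stirlingSnd (t - p.2.2) p.2.1 : ℤ) * (Nat.factorial p.2.1 : ℤ))
          * x ^ (p.1 + p.2.1 + p.2.2) := by
    rintro ⟨i, j, k⟩ -
    rw [hG, key3 i j k]
    push_cast
    ring
  rw [Finset.sum_congr rfl hfib]
  -- now reshape the RHS
  have hkext : ∀ i j : ℕ,
      (∑ k ∈ Finset.range (t - j + 1),
        (s.choose i : ℤ) * (t.choose k : ℤ) * (stirlingSnd (s - i) j : ℤ)
          * (stirlingSnd (t - k) j : ℤ) * (Nat.factorial j : ℤ) * x ^ (i + j + k))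
      = ∑ k ∈ Finset.range (t + 1),
        (s.choose i : ℤ) * (t.choose k : ℤ) * (stirlingSnd (s - i) j : ℤ)
          * (stirlingSnd (t - k) j : ℤ) * (Nat.factorial j : ℤ) * x ^ (i + j + k) := by
    intro i j
    apply Finset.sum_subset (Finset.range_subset_range.2 (by omega))
    intro k hk hk'
    rw [Finset.mem_range] at hk hk'
    rw [stirling_eq_zero (a := t - k) (b := j) (by omega)]
    push_cast
    ring
  have hjext : ∀ i : ℕ,
      (∑ j ∈ Finset.range (s - i + 1), ∑ k ∈ Finset.range (t + 1),
        (s.choose i : ℤ) * (t.choose k : ℤ) * (stirlingSnd (s - i) j : ℤ)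
          * (stirlingSnd (t - k) j : ℤ) * (Nat.factorial j : ℤ) * x ^ (i + j + k))
      = ∑ j ∈ Finset.range (s + 1), ∑ k ∈ Finset.range (t + 1),
        (s.choose i : ℤ) * (t.choose k : ℤ) * (stirlingSnd (s - i) j : ℤ)
          * (stirlingSnd (t - k) j : ℤ) * (Nat.factorial j : ℤ) * x ^ (i + j + k) := by
    intro i
    apply Finset.sum_subset (Finset.range_subset_range.2 (by omega))
    intro j hj hj'
    rw [Finset.mem_range] at hj hj'
    apply Finset.sum_eq_zero
    intro k _
    rw [stirling_eq_zero (a := s - i) (b := j) (by omega)]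
    push_cast
    ring
  rw [Finset.sum_product]
  apply Finset.sum_congr rfl
  intro i _
  rw [Finset.sum_product]
  conv_rhs => rw [Finset.sum_congr rfl (fun j _ => hkext i j), hjext i]
end
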